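/- arXiv:nlin/0407024 — 5 statements merged into one kernel-verified Lean document; each statement's English description precedes it below -/
import Mathlib

section
/- A sequence π of n > 1 nonnegative integers is graphic (i.e., is the degree sequence of a simple graph on n vertices) if and only if the sequence π' with n−1 elements, obtained from π by deleting its largest element d_max and subtracting 1 from its d_max next largest elements, is graphic. -/
open SimpleGraph Finset

/-- The normalized Laplacian matrix `I - D^{-1/2} A D^{-1/2}` of a finite simple graph. -/
noncomputable def normLap {n : ℕ} (G : SimpleGraph (Fin n)) [DecidableRel G.Adj] :
    Matrix (Fin n) (Fin n) ℝ :=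
  Matrix.of fun v w =>
    if v = w then (if G.degree v = 0 then 0 else 1)
    else if G.Adj v w then -((Real.sqrt (G.degree v) * Real.sqrt (G.degree w))⁻¹)
    else 0

/-- The smallest nontrivial (nonzero) eigenvalue of the normalized Laplacian. -/
noncomputable def lambda1 {n : ℕ} (G : SimpleGraph (Fin n)) [DecidableRel G.Adj] : ℝ :=
  sInf {μ : ℝ | μ ≠ 0 ∧ μ ∈ spectrum ℝ (normLap G)}

/-- The degree sequence (as a multiset) of a finite simple graph. -/
def degSeq {n : ℕ} (G : SimpleGraph (Fin n)) [DecidableRel G.Adj] : Multiset ℕ :=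
  Finset.univ.val.map fun v => G.degree v

/-- A multiset of natural numbers is graphic if it is the degree sequence of a simple graph. -/
def Graphic (π : Multiset ℕ) : Prop :=
  ∃ (G : SimpleGraph (Fin (Multiset.card π))) (_ : DecidableRel G.Adj), degSeq G = π

/-! ### Auxiliary machinery for Havel–Hakimi -/

section Perm

lemma exists_perm_comp {n : ℕ} (f g : Fin n → ℕ)
    (h : Multiset.map f Finset.univ.val = Multiset.map g Finset.univ.val) :
    ∃ σ : Equiv.Perm (Fin n), ∀ i, f (σ i) = g i := by
  classical
  have h1 : ∀ (F : Fin n → ℕ) (c : ℕ), Multiset.count c (Multiset.map F Finset.univ.val)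
      = Fintype.card {a // F a = c} := by
    intro F c
    rw [Multiset.count_map]
    have : Multiset.card (Multiset.filter (fun a => c = F a) Finset.univ.val)
        = (Finset.univ.filter (fun a => c = F a)).card := rfl
    rw [this, ← Fintype.card_subtype]
    exact Fintype.card_congr (Equiv.subtypeEquivRight (by intro x; exact eq_comm))
  have hc : ∀ c : ℕ, Fintype.card {a // g a = c} = Fintype.card {b // f b = c} := by
    intro c; rw [← h1, ← h1, h]
  have e : ∀ c : ℕ, {a // g a = c} ≃ {b // f b = c} := fun c => Fintype.equivOfCardEq (hc c)
  exact ⟨Equiv.ofFiberEquiv e, fun i => Equiv.ofFiberEquiv_map e i⟩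

instance comapDec {m n : ℕ} (f : Fin m → Fin n) (G : SimpleGraph (Fin n))
    [h : DecidableRel G.Adj] : DecidableRel (G.comap f).Adj := fun a b => h (f a) (f b)

lemma comap_degree {m n : ℕ} (G : SimpleGraph (Fin n)) [h : DecidableRel G.Adj]
    (σ : Fin m ≃ Fin n) (v : Fin m) :
    ((G.comap σ).degree v : ℕ) = G.degree (σ v) := by
  classical
  have hN : (G.comap ⇑σ).neighborFinset v = (G.neighborFinset (σ v)).image σ.symm := by
    ext w
    simp [SimpleGraph.mem_neighborFinset, SimpleGraph.comap_adj]
    constructor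
    · intro hw; exact ⟨σ w, hw, by simp⟩
    · rintro ⟨u, hu, rfl⟩; simpa using hu
  rw [SimpleGraph.degree, hN, Finset.card_image_of_injective _ σ.symm.injective,
    ← SimpleGraph.degree]

lemma graphic_iff_degfun (L : List ℕ) :
    Graphic (↑L : Multiset ℕ) ↔
    ∃ (G : SimpleGraph (Fin L.length)) (_ : DecidableRel G.Adj),
      ∀ i : Fin L.length, G.degree i = L.get i := by
  constructor
  · rintro ⟨G, inst, hG⟩
    have hds : degSeq G = Multiset.map (fun v => G.degree v) Finset.univ.val := rfl
    have hL : (↑L : Multiset ℕ)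
        = Multiset.map (fun i : Fin L.length => L.get i) Finset.univ.val := by
      rw [Fin.univ_val_map, List.ofFn_get]
    obtain ⟨σ, hσ⟩ := exists_perm_comp (fun v => G.degree v) (fun i => L.get i)
      (by rw [← hds, hG]; exact hL)
    refine ⟨(G.comap σ : SimpleGraph (Fin L.length)), ?_, ?_⟩
    · exact fun a b => inst (σ a) (σ b)
    · intro i; exact (comap_degree (m := L.length) G σ i).trans (hσ i)
  · rintro ⟨G, inst, hdeg⟩
    refine ⟨G, inst, ?_⟩
    change Multiset.map (fun v => G.degree v) (Finset.univ : Finset (Fin L.length)).val = _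
    rw [Fin.univ_val_map]
    congr 1
    rw [funext hdeg]
    exact List.ofFn_get L

end Perm

section DelAdd

/-- Delete the vertex `0` of a graph on `Fin (n+1)`. -/
def delZero {n : ℕ} (G : SimpleGraph (Fin (n+1))) : SimpleGraph (Fin n) where
  Adj a b := G.Adj a.succ b.succ
  symm := ⟨fun _ _ h => G.symm.symm _ _ h⟩
  loopless := ⟨fun _ h => G.loopless.irrefl _ h⟩

instance delZeroDec {n : ℕ} (G : SimpleGraph (Fin (n+1))) [h : DecidableRel G.Adj] :
    DecidableRel (delZero G).Adj := fun a b => h a.succ b.succ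

lemma delZero_degree {n : ℕ} (G : SimpleGraph (Fin (n+1))) [DecidableRel G.Adj] (a : Fin n) :
    (delZero G).degree a = G.degree a.succ - (if G.Adj a.succ 0 then 1 else 0) := by
  classical
  have hN : (G.neighborFinset a.succ).erase 0
      = ((delZero G).neighborFinset a).map (Fin.succEmb n) := by
    ext w
    simp only [Finset.mem_erase, Finset.mem_map, SimpleGraph.mem_neighborFinset]; simp only [Finset.mem_erase, SimpleGraph.mem_neighborFinset, Finset.mem_map,
      Fin.succEmb, Function.Embedding.coeFn_mk, delZero]
    constructor
    · rintro ⟨hw0, hw⟩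
      obtain ⟨b, rfl⟩ := Fin.exists_succ_eq.2 hw0
      exact ⟨b, hw, rfl⟩
    · rintro ⟨b, hb, rfl⟩
      exact ⟨Fin.succ_ne_zero b, hb⟩
  have h2 := congrArg Finset.card hN
  rw [Finset.card_map, Finset.card_erase_eq_ite] at h2
  rw [SimpleGraph.degree, ← h2, SimpleGraph.degree]
  by_cases h : G.Adj a.succ 0 <;> simp [h]

/-- Add a new vertex `0` to a graph on `Fin n`, joined to the set `S`. -/
def addZero {n : ℕ} (G : SimpleGraph (Fin n)) (S : Finset (Fin n)) :
    SimpleGraph (Fin (n+1)) where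
  Adj x y := (∃ a b : Fin n, x = a.succ ∧ y = b.succ ∧ G.Adj a b) ∨
             (x = 0 ∧ ∃ b ∈ S, y = b.succ) ∨ (y = 0 ∧ ∃ a ∈ S, x = a.succ)
  symm := by
    refine ⟨?_⟩
    rintro x y (⟨a, b, rfl, rfl, h⟩ | ⟨rfl, b, hb, rfl⟩ | ⟨rfl, a, ha, rfl⟩)
    · exact Or.inl ⟨b, a, rfl, rfl, h.symm⟩
    · exact Or.inr (Or.inr ⟨rfl, b, hb, rfl⟩)
    · exact Or.inr (Or.inl ⟨rfl, a, ha, rfl⟩)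
  loopless := by
    refine ⟨?_⟩
    rintro x (⟨a, b, rfl, hab, h⟩ | ⟨rfl, b, hb, h⟩ | ⟨rfl, a, ha, h⟩)
    · cases Fin.succ_inj.1 hab; exact G.loopless.irrefl _ h
    · exact (Fin.succ_ne_zero b) h.symm
    · exact (Fin.succ_ne_zero a) h.symm

instance addZeroDec {n : ℕ} (G : SimpleGraph (Fin n)) [DecidableRel G.Adj] (S : Finset (Fin n)) :
    DecidableRel (addZero G S).Adj := fun _ _ =>
  inferInstanceAs (Decidable (_ ∨ _ ∨ _))

lemma addZero_adj_zero {n : ℕ} (G : SimpleGraph (Fin n)) (S : Finset (Fin n)) (w : Fin (n+1)) :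
    (addZero G S).Adj 0 w ↔ ∃ b ∈ S, w = b.succ := by
  simp only [addZero]
  constructor
  · rintro (⟨a, b, h0, rfl, h⟩ | ⟨-, b, hb, rfl⟩ | ⟨rfl, a, ha, h0⟩)
    · exact absurd h0 (Fin.succ_ne_zero a).symm
    · exact ⟨b, hb, rfl⟩
    · exact absurd h0 (Fin.succ_ne_zero a).symm
  · rintro ⟨b, hb, rfl⟩; exact Or.inr (Or.inl ⟨trivial, b, hb, rfl⟩)

lemma addZero_adj_succ {n : ℕ} (G : SimpleGraph (Fin n)) (S : Finset (Fin n)) (a : Fin n)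
    (w : Fin (n+1)) :
    (addZero G S).Adj a.succ w ↔ (∃ b : Fin n, w = b.succ ∧ G.Adj a b) ∨ (w = 0 ∧ a ∈ S) := by
  simp only [addZero]
  constructor
  · rintro (⟨a', b, ha, rfl, h⟩ | ⟨h0, -⟩ | ⟨rfl, a', ha', h0⟩)
    · exact Or.inl ⟨b, rfl, by rwa [Fin.succ_inj.1 ha]⟩
    · exact absurd h0 (Fin.succ_ne_zero a)
    · exact Or.inr ⟨rfl, by rwa [Fin.succ_inj.1 h0]⟩
  · rintro (⟨b, rfl, h⟩ | ⟨rfl, ha⟩)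
    · exact Or.inl ⟨a, b, rfl, rfl, h⟩
    · exact Or.inr (Or.inr ⟨rfl, a, ha, rfl⟩)

lemma addZero_degree_zero {n : ℕ} (G : SimpleGraph (Fin n)) [DecidableRel G.Adj]
    (S : Finset (Fin n)) : (addZero G S).degree 0 = S.card := by
  classical
  have hN : (addZero G S).neighborFinset 0 = S.map (Fin.succEmb n) := by
    ext w
    simp only [SimpleGraph.mem_neighborFinset, addZero_adj_zero, Finset.mem_map,
      Fin.succEmb, Function.Embedding.coeFn_mk]
    constructor
    · rintro ⟨b, hb, rfl⟩; exact ⟨b, hb, rfl⟩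
    · rintro ⟨b, hb, rfl⟩; exact ⟨b, hb, rfl⟩
  rw [SimpleGraph.degree, hN, Finset.card_map]

lemma addZero_degree_succ {n : ℕ} (G : SimpleGraph (Fin n)) [DecidableRel G.Adj]
    (S : Finset (Fin n)) (a : Fin n) :
    (addZero G S).degree a.succ = G.degree a + (if a ∈ S then 1 else 0) := by
  classical
  have hN : (addZero G S).neighborFinset a.succ
      = (G.neighborFinset a).map (Fin.succEmb n) ∪ (if a ∈ S then {0} else ∅) := by
    ext w
    simp only [SimpleGraph.mem_neighborFinset, addZero_adj_succ, Finset.mem_union,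
      Finset.mem_map, Fin.succEmb, Function.Embedding.coeFn_mk]
    by_cases ha : a ∈ S
    · simp only [ha, if_true, Finset.mem_singleton, and_true]
      constructor
      · rintro (⟨b, rfl, h⟩ | rfl)
        · exact Or.inl ⟨b, h, rfl⟩
        · exact Or.inr rfl
      · rintro (⟨b, h, rfl⟩ | rfl)
        · exact Or.inl ⟨b, rfl, h⟩
        · exact Or.inr rfl
    · simp only [ha, if_false, Finset.notMem_empty, or_false, and_false]
      constructor
      · rintro ⟨b, rfl, h⟩; exact ⟨b, h, rfl⟩
      · rintro ⟨b, h, rfl⟩; exact ⟨b, rfl, h⟩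
  have hdisj : Disjoint ((G.neighborFinset a).map (Fin.succEmb n))
      (if a ∈ S then ({0} : Finset (Fin (n+1))) else ∅) := by
    by_cases ha : a ∈ S <;> simp only [ha, if_true, if_false, Finset.disjoint_empty_right]
    rw [Finset.disjoint_singleton_right]
    simp only [Finset.mem_map, Fin.succEmb, Function.Embedding.coeFn_mk]
    rintro ⟨b, -, hb⟩
    exact Fin.succ_ne_zero b hb
  rw [SimpleGraph.degree, hN, Finset.card_union_of_disjoint hdisj, Finset.card_map]
  congr 1
  by_cases ha : a ∈ S <;> simp [ha]

end DelAdd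

section Swap

/-- Remove edges `ab`, `ce`; add edges `ac`, `be`. -/
def swapG {V : Type*} (G : SimpleGraph V) (a b c e : V) : SimpleGraph V where
  Adj x y := x ≠ y ∧
    ¬((x = a ∧ y = b) ∨ (x = b ∧ y = a) ∨ (x = c ∧ y = e) ∨ (x = e ∧ y = c)) ∧
    ((x = a ∧ y = c) ∨ (x = c ∧ y = a) ∨ (x = b ∧ y = e) ∨ (x = e ∧ y = b) ∨ G.Adj x y)
  symm := by
    refine ⟨?_⟩
    rintro x y ⟨h1, h2, h3⟩
    refine ⟨h1.symm, fun hr => h2 (by tauto), ?_⟩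
    rcases h3 with h|h|h|h|h
    · exact Or.inr (Or.inl ⟨h.2, h.1⟩)
    · exact Or.inl ⟨h.2, h.1⟩
    · exact Or.inr (Or.inr (Or.inr (Or.inl ⟨h.2, h.1⟩)))
    · exact Or.inr (Or.inr (Or.inl ⟨h.2, h.1⟩))
    · exact Or.inr (Or.inr (Or.inr (Or.inr h.symm)))
  loopless := ⟨fun x h => h.1 rfl⟩

instance swapGDec {V : Type*} [DecidableEq V] (G : SimpleGraph V) [DecidableRel G.Adj]
    (a b c e : V) : DecidableRel (swapG G a b c e).Adj := fun _ _ =>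
  inferInstanceAs (Decidable (_ ∧ _ ∧ _))

variable {V : Type*} [Fintype V] [DecidableEq V] {G : SimpleGraph V} [DecidableRel G.Adj]
  {a b c e : V}

variable (hab : G.Adj a b) (hce : G.Adj c e) (hac : ¬G.Adj a c) (hbe : ¬G.Adj b e)
  (h_ac : a ≠ c) (h_ae : a ≠ e) (h_bc : b ≠ c) (h_be : b ≠ e)

include hab hce hac hbe h_ac h_ae h_bc h_be

lemma swapG_nbhd_a :
    (swapG G a b c e).neighborFinset a = insert c ((G.neighborFinset a).erase b) := by
  have h_ab : a ≠ b := G.ne_of_adj hab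
  have h_ce : c ≠ e := G.ne_of_adj hce
  have h_ba : b ≠ a := h_ab.symm
  have h_ca : c ≠ a := h_ac.symm
  have h_cb : c ≠ b := h_bc.symm
  have h_ea : e ≠ a := h_ae.symm
  have h_eb : e ≠ b := h_be.symm
  have h_ec : e ≠ c := h_ce.symm
  have hba : G.Adj b a := hab.symm
  have hec : G.Adj e c := hce.symm
  have hca : ¬G.Adj c a := fun h => hac h.symm
  have heb : ¬G.Adj e b := fun h => hbe h.symm
  ext w
  simp only [SimpleGraph.mem_neighborFinset]; simp only [SimpleGraph.mem_neighborFinset, swapG, Finset.mem_insert, Finset.mem_erase]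
  by_cases hwb : w = b <;> by_cases hwc : w = c <;> by_cases hwe : w = e <;>
    by_cases hwa : w = a <;> simp_all [G.ne_of_adj]

lemma swapG_nbhd_b :
    (swapG G a b c e).neighborFinset b = insert e ((G.neighborFinset b).erase a) := by
  have h_ab : a ≠ b := G.ne_of_adj hab
  have h_ce : c ≠ e := G.ne_of_adj hce
  have h_ba : b ≠ a := h_ab.symm
  have h_ca : c ≠ a := h_ac.symm
  have h_cb : c ≠ b := h_bc.symm
  have h_ea : e ≠ a := h_ae.symm
  have h_eb : e ≠ b := h_be.symm
  have h_ec : e ≠ c := h_ce.symm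
  have hba : G.Adj b a := hab.symm
  have hec : G.Adj e c := hce.symm
  have hca : ¬G.Adj c a := fun h => hac h.symm
  have heb : ¬G.Adj e b := fun h => hbe h.symm
  ext w
  simp only [SimpleGraph.mem_neighborFinset]; simp only [SimpleGraph.mem_neighborFinset, swapG, Finset.mem_insert, Finset.mem_erase]
  by_cases hwb : w = b <;> by_cases hwc : w = c <;> by_cases hwe : w = e <;>
    by_cases hwa : w = a <;> simp_all [G.ne_of_adj]

lemma swapG_nbhd_c :
    (swapG G a b c e).neighborFinset c = insert a ((G.neighborFinset c).erase e) := by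
  have h_ab : a ≠ b := G.ne_of_adj hab
  have h_ce : c ≠ e := G.ne_of_adj hce
  have h_ba : b ≠ a := h_ab.symm
  have h_ca : c ≠ a := h_ac.symm
  have h_cb : c ≠ b := h_bc.symm
  have h_ea : e ≠ a := h_ae.symm
  have h_eb : e ≠ b := h_be.symm
  have h_ec : e ≠ c := h_ce.symm
  have hba : G.Adj b a := hab.symm
  have hec : G.Adj e c := hce.symm
  have hca : ¬G.Adj c a := fun h => hac h.symm
  have heb : ¬G.Adj e b := fun h => hbe h.symm
  ext w
  simp only [SimpleGraph.mem_neighborFinset]; simp only [SimpleGraph.mem_neighborFinset, swapG, Finset.mem_insert, Finset.mem_erase]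
  by_cases hwb : w = b <;> by_cases hwc : w = c <;> by_cases hwe : w = e <;>
    by_cases hwa : w = a <;> simp_all [G.ne_of_adj]

lemma swapG_nbhd_e :
    (swapG G a b c e).neighborFinset e = insert b ((G.neighborFinset e).erase c) := by
  have h_ab : a ≠ b := G.ne_of_adj hab
  have h_ce : c ≠ e := G.ne_of_adj hce
  have h_ba : b ≠ a := h_ab.symm
  have h_ca : c ≠ a := h_ac.symm
  have h_cb : c ≠ b := h_bc.symm
  have h_ea : e ≠ a := h_ae.symm
  have h_eb : e ≠ b := h_be.symm
  have h_ec : e ≠ c := h_ce.symm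
  have hba : G.Adj b a := hab.symm
  have hec : G.Adj e c := hce.symm
  have hca : ¬G.Adj c a := fun h => hac h.symm
  have heb : ¬G.Adj e b := fun h => hbe h.symm
  ext w
  simp only [SimpleGraph.mem_neighborFinset]; simp only [SimpleGraph.mem_neighborFinset, swapG, Finset.mem_insert, Finset.mem_erase]
  by_cases hwb : w = b <;> by_cases hwc : w = c <;> by_cases hwe : w = e <;>
    by_cases hwa : w = a <;> simp_all [G.ne_of_adj]

omit hab hce hac hbe h_ac h_ae h_bc h_be in
lemma swapG_nbhd_other {v : V} (hva : v ≠ a) (hvb : v ≠ b) (hvc : v ≠ c) (hve : v ≠ e) :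
    (swapG G a b c e).neighborFinset v = G.neighborFinset v := by
  ext w
  simp only [SimpleGraph.mem_neighborFinset]; simp only [SimpleGraph.mem_neighborFinset, swapG]
  constructor
  · rintro ⟨-, -, (⟨h,-⟩|⟨h,-⟩|⟨h,-⟩|⟨h,-⟩|h)⟩ <;>
      first | exact absurd h (by assumption) | exact h
  · intro h
    exact ⟨G.ne_of_adj h, by rintro (⟨rfl,-⟩|⟨rfl,-⟩|⟨rfl,-⟩|⟨rfl,-⟩) <;> simp_all,
      Or.inr (Or.inr (Or.inr (Or.inr h)))⟩

lemma swapG_degree_eq (v : V) : (swapG G a b c e).degree v = G.degree v := by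
  by_cases hva : v = a
  · subst hva
    rw [SimpleGraph.degree, swapG_nbhd_a hab hce hac hbe h_ac h_ae h_bc h_be,
      Finset.card_insert_of_notMem (by simp [h_ac, hac]),
      Finset.card_erase_of_mem (by simp [hab]), SimpleGraph.degree]
    have : 0 < (G.neighborFinset v).card := Finset.card_pos.2 ⟨b, by simp [hab]⟩
    omega
  by_cases hvb : v = b
  · subst hvb
    rw [SimpleGraph.degree, swapG_nbhd_b hab hce hac hbe h_ac h_ae h_bc h_be,
      Finset.card_insert_of_notMem (by simp [h_be, hbe]),
      Finset.card_erase_of_mem (by simp [hab.symm]), SimpleGraph.degree]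
    have : 0 < (G.neighborFinset v).card := Finset.card_pos.2 ⟨a, by simp [hab.symm]⟩
    omega
  by_cases hvc : v = c
  · subst hvc
    rw [SimpleGraph.degree, swapG_nbhd_c hab hce hac hbe h_ac h_ae h_bc h_be,
      Finset.card_insert_of_notMem (by simp only [Finset.mem_erase,
        SimpleGraph.mem_neighborFinset, not_and]; exact fun _ h => hac (G.symm.symm _ _ h)),
      Finset.card_erase_of_mem (by simp [hce]), SimpleGraph.degree]
    have : 0 < (G.neighborFinset v).card := Finset.card_pos.2 ⟨e, by simp [hce]⟩
    omega
  by_cases hve : v = e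
  · subst hve
    rw [SimpleGraph.degree, swapG_nbhd_e hab hce hac hbe h_ac h_ae h_bc h_be,
      Finset.card_insert_of_notMem (by simp only [Finset.mem_erase,
        SimpleGraph.mem_neighborFinset, not_and]; exact fun _ h => hbe (G.symm.symm _ _ h)),
      Finset.card_erase_of_mem (by simp [hce.symm]), SimpleGraph.degree]
    have : 0 < (G.neighborFinset v).card := Finset.card_pos.2 ⟨c, by simp [hce.symm]⟩
    omega
  · rw [SimpleGraph.degree, swapG_nbhd_other hva hvb hvc hve, SimpleGraph.degree]

end Swap

section Main

/-- The target neighborhood of vertex `0`. -/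
def tgt (n : ℕ) (d : ℕ) : Finset (Fin (n+1)) :=
  (Finset.univ.filter (fun i : Fin n => (i : ℕ) < d)).map (Fin.succEmb n)

lemma mem_tgt {n d : ℕ} (v : Fin (n+1)) : v ∈ tgt n d ↔ 0 < (v : ℕ) ∧ (v : ℕ) ≤ d := by
  simp only [tgt, Finset.mem_map, Finset.mem_filter, Finset.mem_univ, true_and,
    Fin.succEmb, Function.Embedding.coeFn_mk]
  constructor
  · rintro ⟨b, hb, rfl⟩
    simp [Fin.val_succ]; omega
  · rintro ⟨h1, h2⟩
    have : v ≠ 0 := fun h => by simp [h] at h1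
    obtain ⟨b, rfl⟩ := Fin.exists_succ_eq.2 this
    exact ⟨b, by simp [Fin.val_succ] at h2 ⊢; omega, rfl⟩

lemma card_filter_lt (n d : ℕ) (hd : d ≤ n) :
    (Finset.univ.filter (fun i : Fin n => (i : ℕ) < d)).card = d := by
  have : (Finset.univ.filter (fun i : Fin n => (i : ℕ) < d))
      = (Finset.univ : Finset (Fin d)).map ⟨Fin.castLE hd, Fin.castLE_injective hd⟩ := by
    ext i
    simp only [Finset.mem_filter, Finset.mem_univ, true_and, Finset.mem_map,
      Function.Embedding.coeFn_mk]
    constructor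
    · intro h; exact ⟨⟨i.val, h⟩, rfl⟩
    · rintro ⟨j, rfl⟩; exact j.isLt
  rw [this, Finset.card_map, Finset.card_univ, Fintype.card_fin]

lemma card_tgt {n d : ℕ} (hd : d ≤ n) : (tgt n d).card = d := by
  rw [tgt, Finset.card_map, card_filter_lt n d hd]

lemma exists_good (d : ℕ) (t : List ℕ)
    (hsorted : List.Pairwise (· ≥ ·) (d :: t)) (hd : d ≤ t.length)
    (hex : ∃ (G : SimpleGraph (Fin (t.length+1))) (_ : DecidableRel G.Adj),
      ∀ i : Fin (t.length+1), G.degree i = (d :: t).get i) :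
    ∃ (G : SimpleGraph (Fin (t.length+1))) (_ : DecidableRel G.Adj),
      (∀ i : Fin (t.length+1), G.degree i = (d :: t).get i) ∧
      G.neighborFinset 0 = tgt t.length d := by
  classical
  set n := t.length with hn
  set T := tgt n d with hT
  set A : Set ℕ := {k | ∃ (G : SimpleGraph (Fin (n+1))) (_ : DecidableRel G.Adj),
    (∀ i : Fin (n+1), G.degree i = (d :: t).get i) ∧ ((G.neighborFinset 0) ∩ T).card = k}
    with hA
  have hAne : A.Nonempty := by
    obtain ⟨G, inst, hdeg⟩ := hex
    exact ⟨_, G, inst, hdeg, rfl⟩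
  have hAbdd : BddAbove A := by
    refine ⟨n + 1, ?_⟩
    rintro k ⟨G, inst, -, rfl⟩
    calc ((G.neighborFinset 0) ∩ T).card ≤ (univ : Finset (Fin (n+1))).card :=
          Finset.card_le_card (Finset.subset_univ _)
      _ = n + 1 := by simp
  obtain ⟨G, inst, hdeg, hcard⟩ := Nat.sSup_mem hAne hAbdd
  refine ⟨G, inst, hdeg, ?_⟩
  have hcard0 : (G.neighborFinset 0).card = d := by
    rw [← SimpleGraph.degree]; exact hdeg 0
  have hsubs : T ⊆ G.neighborFinset 0 := by
    by_contra hsub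
    obtain ⟨i, hiT, hiN⟩ := Finset.not_subset.1 hsub
    have hinter_lt : ((G.neighborFinset 0) ∩ T).card < d := by
      have h1 : (G.neighborFinset 0) ∩ T ⊆ T.erase i :=
        fun w hw => Finset.mem_erase.2 ⟨fun h => hiN (h ▸ (Finset.mem_inter.1 hw).1),
          (Finset.mem_inter.1 hw).2⟩
      calc ((G.neighborFinset 0) ∩ T).card ≤ (T.erase i).card := Finset.card_le_card h1
        _ = T.card - 1 := Finset.card_erase_of_mem hiT
        _ < d := by rw [card_tgt hd]; have := Finset.card_pos.2 ⟨i, hiT⟩;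
                    rw [card_tgt hd] at this; omega
    obtain ⟨j, hjN, hjT⟩ : ∃ j ∈ G.neighborFinset 0, j ∉ T := by
      by_contra hc
      push_neg at hc
      have : G.neighborFinset 0 ⊆ (G.neighborFinset 0) ∩ T :=
        fun w hw => Finset.mem_inter.2 ⟨hw, hc w hw⟩
      have := Finset.card_le_card this
      omega
    have hi_pos : 0 < (i : ℕ) := ((mem_tgt i).1 hiT).1
    have hi_le : (i : ℕ) ≤ d := ((mem_tgt i).1 hiT).2
    have hi0 : i ≠ 0 := by rintro rfl; simp at hi_pos
    have hj0 : j ≠ 0 := by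
      rintro rfl; exact G.loopless.irrefl 0 ((SimpleGraph.mem_neighborFinset _ _ _).1 hjN)
    have hj_gt : d < (j : ℕ) := by
      by_contra hc
      exact hjT ((mem_tgt j).2 ⟨Nat.pos_of_ne_zero (fun h => hj0 (Fin.ext h)), by omega⟩)
    have hij : i ≠ j := fun h => hjT (h ▸ hiT)
    have hAdj0j : G.Adj 0 j := (SimpleGraph.mem_neighborFinset _ _ _).1 hjN
    have hnAdj0i : ¬G.Adj 0 i := fun h => hiN ((SimpleGraph.mem_neighborFinset _ _ _).2 h)
    have hdegij : G.degree j ≤ G.degree i := by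
      rw [hdeg i, hdeg j]
      exact hsorted.rel_get_of_le (by exact Fin.le_def.2 (by omega))
    obtain ⟨w, hwNi, hwj, hwNj⟩ :
        ∃ w ∈ G.neighborFinset i, w ≠ j ∧ w ∉ G.neighborFinset j := by
      by_contra hc
      push_neg at hc
      have h0Nj : (0 : Fin (n+1)) ∈ G.neighborFinset j :=
        (SimpleGraph.mem_neighborFinset _ _ _).2 (G.symm.symm _ _ hAdj0j)
      have h0Ni : (0 : Fin (n+1)) ∉ G.neighborFinset i :=
        fun h => hnAdj0i (G.symm.symm _ _ ((SimpleGraph.mem_neighborFinset _ _ _).1 h))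
      have hiNi : i ∉ G.neighborFinset i := by
        simp [SimpleGraph.mem_neighborFinset]
      by_cases hji : j ∈ G.neighborFinset i
      · have hiNj : i ∈ G.neighborFinset j := by
          rw [SimpleGraph.mem_neighborFinset] at hji ⊢
          exact hji.symm
        have hmemE : i ∈ (G.neighborFinset j).erase 0 := Finset.mem_erase.2 ⟨hi0, hiNj⟩
        have hsub2 : (G.neighborFinset i).erase j
            ⊆ ((G.neighborFinset j).erase 0).erase i := by
          intro x hx
          obtain ⟨hxj, hxNi⟩ := Finset.mem_erase.1 hx
          refine Finset.mem_erase.2 ⟨fun h => hiNi (h ▸ hxNi), Finset.mem_erase.2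
            ⟨fun h => h0Ni (h ▸ hxNi), hc x hxNi hxj⟩⟩
        have hc1 := Finset.card_le_card hsub2
        rw [Finset.card_erase_of_mem hji, Finset.card_erase_of_mem hmemE,
          Finset.card_erase_of_mem h0Nj] at hc1
        have hc2 : 0 < (G.neighborFinset i).card := Finset.card_pos.2 ⟨j, hji⟩
        have hc3 : 0 < (G.neighborFinset j).card := Finset.card_pos.2 ⟨0, h0Nj⟩
        have hc4 : 2 ≤ (G.neighborFinset j).card := by
          have h5 : 0 < ((G.neighborFinset j).erase 0).card := Finset.card_pos.2 ⟨i, hmemE⟩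
          rw [Finset.card_erase_of_mem h0Nj] at h5
          omega
        simp only [SimpleGraph.degree] at hdegij
        omega
      · have hsub2 : G.neighborFinset i ⊆ (G.neighborFinset j).erase 0 := by
          intro x hx
          refine Finset.mem_erase.2 ⟨fun h => h0Ni (h ▸ hx), hc x hx (fun h => hji (h ▸ hx))⟩
        have hc1 := Finset.card_le_card hsub2
        rw [Finset.card_erase_of_mem h0Nj] at hc1
        have hc3 : 0 < (G.neighborFinset j).card := Finset.card_pos.2 ⟨0, h0Nj⟩
        simp only [SimpleGraph.degree] at hdegij
        omega
    have hAdjiw : G.Adj i w := (SimpleGraph.mem_neighborFinset _ _ _).1 hwNi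
    have hnAdjjw : ¬G.Adj j w := fun h => hwNj ((SimpleGraph.mem_neighborFinset _ _ _).2 h)
    have h0i : (0 : Fin (n+1)) ≠ i := hi0.symm
    have h0w : (0 : Fin (n+1)) ≠ w := by rintro rfl; exact hnAdj0i (G.symm.symm _ _ hAdjiw)
    have hji' : j ≠ i := hij.symm
    let G' := swapG G 0 j i w
    have hdeg' : ∀ v : Fin (n+1), G'.degree v = (d :: t).get v := fun v =>
      (swapG_degree_eq hAdj0j hAdjiw hnAdj0i hnAdjjw h0i h0w hji' hwj.symm v).trans (hdeg v)
    have hN' : G'.neighborFinset 0 = insert i ((G.neighborFinset 0).erase j) :=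
      swapG_nbhd_a hAdj0j hAdjiw hnAdj0i hnAdjjw h0i h0w hji' hwj.symm
    have hcard' : ((G'.neighborFinset 0) ∩ T).card = ((G.neighborFinset 0) ∩ T).card + 1 := by
      rw [hN', Finset.insert_inter_of_mem hiT, Finset.erase_inter,
        Finset.erase_eq_of_notMem (fun h => hjT (Finset.mem_inter.1 h).2),
        Finset.card_insert_of_notMem (fun h => hiN (Finset.mem_inter.1 h).1)]
    have hmem : ((G.neighborFinset 0) ∩ T).card + 1 ∈ A :=
      ⟨G', inferInstance, hdeg', hcard'⟩
    have := le_csSup hAbdd hmem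
    omega
  exact (Finset.eq_of_subset_of_card_le hsubs (by rw [hcard0, card_tgt hd])).symm

end Main

lemma targetList_length (d : ℕ) (t : List ℕ) (hd : d ≤ t.length) :
    ((t.take d).map (· - 1) ++ t.drop d).length = t.length := by
  simp only [List.length_append, List.length_map, List.length_take, List.length_drop]
  omega

lemma targetList_getElem (d : ℕ) (t : List ℕ) (hd : d ≤ t.length) (i : ℕ)
    (h : i < ((t.take d).map (· - 1) ++ t.drop d).length) :
    ((t.take d).map (· - 1) ++ t.drop d)[i]
      = if i < d then t[i]'(by rw [targetList_length d t hd] at h; omega) - 1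
        else t[i]'(by rw [targetList_length d t hd] at h; omega) := by
  have h' : i < t.length := by rw [targetList_length d t hd] at h; omega
  by_cases hid : i < d
  · rw [List.getElem_append_left (by simp [List.length_take]; omega), List.getElem_map,
      List.getElem_take]
    simp [hid]
  · rw [List.getElem_append_right (by simp [List.length_take]; omega), List.getElem_drop]
    simp only [hid, if_false, List.length_map, List.length_take]
    congr 1
    omega

/-- **Havel–Hakimi**: a sequence of `n > 1` nonnegative integers (listed in
decreasing order as `d :: t`, with largest element `d`) is graphic iff the sequence
obtained by deleting `d` and subtracting `1` from the `d` next largest elements is graphic. -/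
theorem havel_hakimi (d : ℕ) (t : List ℕ) (ht : t ≠ [])
    (hsorted : List.Pairwise (· ≥ ·) (d :: t)) (hd : d ≤ t.length)
    (hpos : ∀ x ∈ t.take d, 0 < x) :
    Graphic (↑(d :: t) : Multiset ℕ) ↔
      Graphic (↑(((t.take d).map (· - 1) ++ t.drop d) : List ℕ) : Multiset ℕ) := by
  classical
  have hlen : ((t.take d).map (· - 1) ++ t.drop d).length = t.length :=
    targetList_length d t hd
  have hpos' : ∀ (i : ℕ) (h : i < t.length), i < d → 0 < t[i]'(h) := by
    intro i h hid
    apply hpos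
    have heq : (t.take d)[i]'(by simp [List.length_take]; omega) = t[i]'(h) :=
      List.getElem_take
    rw [← heq]
    exact List.getElem_mem _
  constructor
  · intro hG
    rw [graphic_iff_degfun] at hG
    obtain ⟨G0, inst0, hdeg0, hnbhd⟩ := exists_good d t hsorted hd hG
    rw [graphic_iff_degfun]
    refine ⟨(delZero G0).comap (finCongr hlen), inferInstance, ?_⟩
    intro i
    rw [comap_degree, delZero_degree]
    set a : Fin t.length := finCongr hlen i with ha
    have hAdj : G0.Adj a.succ 0 ↔ (a : ℕ) < d := by
      rw [SimpleGraph.adj_comm, ← SimpleGraph.mem_neighborFinset, hnbhd, mem_tgt]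
      simp only [Fin.val_succ]
      omega
    rw [hdeg0 a.succ]
    have hLg : ((t.take d).map (· - 1) ++ t.drop d).get i
        = ((t.take d).map (· - 1) ++ t.drop d)[(i : ℕ)] := rfl
    rw [hLg, targetList_getElem d t hd (i : ℕ) i.isLt]
    have hiv : (i : ℕ) = (a : ℕ) := rfl
    have htg : (d :: t).get a.succ = t[(a : ℕ)]'(a.isLt) := rfl
    rw [htg]
    by_cases hid : (a : ℕ) < d
    · rw [if_pos (hAdj.2 hid), if_pos (show ((i : ℕ)) < d from hid)]
      rfl
    · rw [if_neg (fun h => hid (hAdj.1 h)), if_neg (show ¬((i : ℕ)) < d from hid),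
        Nat.sub_zero]
      rfl
  · intro hG'
    rw [graphic_iff_degfun] at hG'
    obtain ⟨G1, inst1, hdeg1⟩ := hG'
    rw [graphic_iff_degfun]
    have hdeg2 : ∀ i : Fin t.length, (G1.comap (finCongr hlen.symm)).degree i
        = if (i : ℕ) < d then t[(i : ℕ)]'(i.isLt) - 1 else t[(i : ℕ)]'(i.isLt) := by
      intro i
      rw [comap_degree, hdeg1 _]
      have hh : ((t.take d).map (· - 1) ++ t.drop d).get (finCongr hlen.symm i)
          = ((t.take d).map (· - 1) ++ t.drop d)[(i : ℕ)]'(by omega) := rfl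
      rw [hh, targetList_getElem d t hd (i : ℕ) (by omega)]
    refine ⟨addZero (G1.comap (finCongr hlen.symm))
      (Finset.univ.filter (fun i : Fin t.length => (i : ℕ) < d)), inferInstance, ?_⟩
    intro i
    refine Fin.cases ?_ ?_ i
    · rw [addZero_degree_zero, card_filter_lt t.length d hd]
      rfl
    · intro a
      rw [addZero_degree_succ, hdeg2 a]
      have hgetsucc : (d :: t).get a.succ = t[(a : ℕ)]'(a.isLt) := rfl
      rw [hgetsucc]
      by_cases hid : (a : ℕ) < d
      · rw [if_pos hid, if_pos (by simp [hid])]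
        have := hpos' (a : ℕ) a.isLt hid
        omega
      · rw [if_neg hid, if_neg (by simp [hid])]
        omega
end

section
/- A graphic sequence π with n elements has a realization by a connected simple graph if and only if the smallest element of π is positive and the sum of the elements of π is at least 2(n−1). -/
open SimpleGraph Finset

/-! ### Auxiliary machinery -/

lemma aux_reach_of_adj {V : Type*} {G G' : SimpleGraph V}
    (h : ∀ a b, G.Adj a b → G'.Reachable a b) {u v : V} (huv : G.Reachable u v) :
    G'.Reachable u v := by
  obtain ⟨w⟩ := huv
  induction w with
  | nil => exact Reachable.refl _
  | cons hadj p ih => exact (h _ _ hadj).trans ih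

lemma aux_acyclic_sup {V : Type*} {H : SimpleGraph V} (hH : H.IsAcyclic) {u v : V}
    (hne : u ≠ v) (hr : ¬H.Reachable u v) : (H ⊔ edge u v).IsAcyclic := by
  have hadj : ¬H.Adj u v := fun h => hr h.reachable
  have hdel : (H ⊔ edge u v) \ fromEdgeSet {s(u,v)} = H := by
    ext x y
    simp only [sdiff_adj, sup_adj, edge_adj, fromEdgeSet_adj, Set.mem_singleton_iff, Sym2.eq_iff]
    constructor
    · rintro ⟨h1 | h2, h3⟩
      · exact h1
      · exact absurd ⟨h2.1, h2.2⟩ h3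
    · intro h
      refine ⟨Or.inl h, ?_⟩
      rintro ⟨(⟨rfl, rfl⟩ | ⟨rfl, rfl⟩), -⟩
      · exact hadj h
      · exact hadj h.symm
  have hbridge : (H ⊔ edge u v).IsBridge s(u, v) := by
    rw [isBridge_iff, deleteEdges, hdel]
    exact hr
  intro x c hc
  by_cases hmem : s(u,v) ∈ c.edges
  · exact hbridge.notMem_edges_of_isCycle hc hmem
  · have hall : ∀ e ∈ c.edges, e ∈ H.edgeSet := by
      intro e he
      have h1 : e ∈ (H ⊔ edge u v).edgeSet := c.edges_subset_edgeSet he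
      rw [edgeSet_sup, edge_edgeSet_of_ne hne] at h1
      rcases h1 with h1 | h1
      · exact h1
      · rw [Set.mem_singleton_iff] at h1
        exact absurd (h1 ▸ he) hmem
    exact hH _ (hc.transfer hall)

lemma aux_acyclic_card {V : Type*} [Fintype V] [Nonempty V] (H : SimpleGraph V)
    [Fintype H.edgeSet] (hH : H.IsAcyclic) : #H.edgeFinset + 1 ≤ Fintype.card V := by
  classical
  obtain ⟨M, ⟨hHM, hMa⟩, hmax⟩ := Set.Finite.exists_maximalFor id
    {K : SimpleGraph V | H ≤ K ∧ K.IsAcyclic} (Set.toFinite _) ⟨H, le_refl H, hH⟩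
  have hpre : M.Preconnected := by
    by_contra hp
    rw [Preconnected] at hp
    push_neg at hp
    obtain ⟨u, v, hr⟩ := hp
    have hne : u ≠ v := fun h => hr (h ▸ Reachable.refl u)
    have hmem : M ⊔ edge u v ∈ {K : SimpleGraph V | H ≤ K ∧ K.IsAcyclic} :=
      ⟨hHM.trans le_sup_left, aux_acyclic_sup hMa hne hr⟩
    have heq : M = M ⊔ edge u v := le_antisymm le_sup_left (hmax hmem le_sup_left)
    have hadj : (M ⊔ edge u v).Adj u v := by
      rw [sup_adj, edge_adj]; exact Or.inr ⟨Or.inl ⟨rfl, rfl⟩, hne⟩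
    rw [← heq] at hadj
    exact hr hadj.reachable
  have htree : M.IsTree := ⟨(connected_iff M).mpr ⟨hpre, ‹_›⟩, hMa⟩
  have hcard := htree.card_edgeFinset
  have hsub : H.edgeFinset ⊆ M.edgeFinset := edgeFinset_mono hHM
  have := card_le_card hsub
  omega

lemma aux_spanning {V : Type*} [Fintype V] (G : SimpleGraph V) :
    ∃ F, F ≤ G ∧ F.IsAcyclic ∧ ∀ a b, G.Adj a b → F.Reachable a b := by
  classical
  obtain ⟨F, ⟨hFG, hFa⟩, hmax⟩ := Set.Finite.exists_maximalFor id
    {K : SimpleGraph V | K ≤ G ∧ K.IsAcyclic} (Set.toFinite _)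
    ⟨⊥, bot_le, isAcyclic_bot⟩
  refine ⟨F, hFG, hFa, fun a b hab => ?_⟩
  by_contra hr
  have hne : a ≠ b := hab.ne
  have hle : F ⊔ edge a b ≤ G := by
    refine sup_le hFG ?_
    intro x y hxy
    rw [edge_adj] at hxy
    rcases hxy.1 with ⟨rfl, rfl⟩ | ⟨rfl, rfl⟩
    · exact hab
    · exact hab.symm
  have hmem : F ⊔ edge a b ∈ {K : SimpleGraph V | K ≤ G ∧ K.IsAcyclic} :=
    ⟨hle, aux_acyclic_sup hFa hne hr⟩
  have heq : F = F ⊔ edge a b := le_antisymm le_sup_left (hmax hmem le_sup_left)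
  have hadj : (F ⊔ edge a b).Adj a b := by
    rw [sup_adj, edge_adj]; exact Or.inr ⟨Or.inl ⟨rfl, rfl⟩, hne⟩
  rw [← heq] at hadj
  exact hr hadj.reachable

lemma aux_connected_card {n : ℕ} (G : SimpleGraph (Fin n)) [DecidableRel G.Adj]
    (h : G.Connected) : n - 1 ≤ #G.edgeFinset := by
  classical
  obtain ⟨F, hFG, hFa, hFr⟩ := aux_spanning G
  have hne : Nonempty (Fin n) := h.nonempty
  have hpre : F.Preconnected := fun u v => aux_reach_of_adj hFr (h.preconnected u v)
  have htree : F.IsTree := ⟨(connected_iff F).mpr ⟨hpre, hne⟩, hFa⟩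
  have hcard := htree.card_edgeFinset
  have hsub := card_le_card (edgeFinset_mono hFG)
  simp only [Fintype.card_fin] at hcard
  omega

lemma aux_nonbridge {n : ℕ} (hn : 2 ≤ n) (G : SimpleGraph (Fin n)) [DecidableRel G.Adj]
    (hnc : ¬G.Connected) (he : n - 1 ≤ #G.edgeFinset) :
    ∃ a b, G.Adj a b ∧ (G.deleteEdges {s(a,b)}).Reachable a b := by
  classical
  have hne : Nonempty (Fin n) := ⟨⟨0, by omega⟩⟩
  obtain ⟨F, hFG, hFa, hFr⟩ := aux_spanning G
  have hFnc : ¬F.Preconnected := by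
    intro hp
    exact hnc ((connected_iff G).mpr ⟨fun u v => (hp u v).mono hFG, hne⟩)
  rw [Preconnected] at hFnc
  push_neg at hFnc
  obtain ⟨u, v, hr⟩ := hFnc
  have huv : u ≠ v := fun h => hr (h ▸ Reachable.refl u)
  have hFadj : ¬F.Adj u v := fun h => hr h.reachable
  letI : DecidableRel F.Adj := Classical.decRel _
  letI : DecidableRel (F ⊔ edge u v).Adj := Classical.decRel _
  have hbound := aux_acyclic_card (F ⊔ edge u v) (aux_acyclic_sup hFa huv hr)
  have h2 := card_edgeFinset_sup_edge (G := F) hFadj huv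
  rw [h2, Fintype.card_fin] at hbound
  have hsub : F.edgeFinset ⊆ G.edgeFinset := edgeFinset_mono hFG
  obtain ⟨e, heG, heF⟩ : ∃ e ∈ G.edgeFinset, e ∉ F.edgeFinset := by
    by_contra hcon
    push_neg at hcon
    have hsub2 : G.edgeFinset ⊆ F.edgeFinset := fun e he => hcon e he
    have := card_le_card hsub2
    omega
  induction e using Sym2.ind with
  | _ a b =>
    rw [mem_edgeFinset, mem_edgeSet] at heG
    refine ⟨a, b, heG, ?_⟩
    have hFle : F ≤ G.deleteEdges {s(a,b)} := by
      intro x y hxy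
      rw [deleteEdges_adj, Set.mem_singleton_iff]
      refine ⟨hFG hxy, fun hmem => ?_⟩
      rw [Sym2.eq_iff] at hmem
      rcases hmem with ⟨rfl, rfl⟩ | ⟨rfl, rfl⟩
      · exact heF (by rwa [mem_edgeFinset, mem_edgeSet])
      · exact heF (by rw [mem_edgeFinset, mem_edgeSet]; exact hxy.symm)
    exact (hFr a b heG).mono hFle

/-- The 2-switch graph: remove edges ab, cd; add edges ac, bd. -/
def swapGraph {V : Type*} [DecidableEq V] (G : SimpleGraph V) (a b c d : V) : SimpleGraph V where
  Adj x y := (G.Adj x y ∧ s(x,y) ≠ s(a,b) ∧ s(x,y) ≠ s(c,d)) ∨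
    ((s(x,y) = s(a,c) ∨ s(x,y) = s(b,d)) ∧ x ≠ y)
  symm := by
    refine ⟨?_⟩
    intro x y h
    have e : s(y,x) = s(x,y) := Sym2.eq_swap
    rcases h with ⟨h1, h2, h3⟩ | ⟨h4, h5⟩
    · exact Or.inl ⟨h1.symm, by rw [e]; exact h2, by rw [e]; exact h3⟩
    · exact Or.inr ⟨by rw [e]; exact h4, h5.symm⟩
  loopless := by
    refine ⟨?_⟩
    intro x h
    rcases h with ⟨h1, _, _⟩ | ⟨_, h5⟩
    · exact G.irrefl h1
    · exact h5 rfl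

lemma swapGraph_adj {V : Type*} [DecidableEq V] {G : SimpleGraph V} {a b c d x y : V} :
    (swapGraph G a b c d).Adj x y ↔ (G.Adj x y ∧ s(x,y) ≠ s(a,b) ∧ s(x,y) ≠ s(c,d)) ∨
      ((s(x,y) = s(a,c) ∨ s(x,y) = s(b,d)) ∧ x ≠ y) := Iff.rfl

instance swapGraphDec {V : Type*} [DecidableEq V] (G : SimpleGraph V) [DecidableRel G.Adj]
    (a b c d : V) : DecidableRel (swapGraph G a b c d).Adj := fun x y => by
  rw [swapGraph_adj]; infer_instance

lemma swapGraph_comm1 {V : Type*} [DecidableEq V] (G : SimpleGraph V) (a b c d : V) :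
    swapGraph G a b c d = swapGraph G b a d c := by
  ext x y
  rw [swapGraph_adj, swapGraph_adj, show s(b,a) = s(a,b) from Sym2.eq_swap,
    show s(d,c) = s(c,d) from Sym2.eq_swap]
  tauto

lemma swapGraph_comm2 {V : Type*} [DecidableEq V] (G : SimpleGraph V) (a b c d : V) :
    swapGraph G a b c d = swapGraph G c d a b := by
  ext x y
  rw [swapGraph_adj, swapGraph_adj, show s(c,a) = s(a,c) from Sym2.eq_swap,
    show s(d,b) = s(b,d) from Sym2.eq_swap]
  tauto

lemma swapGraph_degree_a {n : ℕ} (G : SimpleGraph (Fin n)) [DecidableRel G.Adj] {a b c d : Fin n}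
    (hab : G.Adj a b) (hnac : ¬G.Adj a c) (hac : a ≠ c) (had : a ≠ d)
    (H : SimpleGraph (Fin n)) [DecidableRel H.Adj]
    (hH : ∀ x y, H.Adj x y ↔ (G.Adj x y ∧ s(x,y) ≠ s(a,b) ∧ s(x,y) ≠ s(c,d)) ∨
      ((s(x,y) = s(a,c) ∨ s(x,y) = s(b,d)) ∧ x ≠ y)) :
    H.degree a = G.degree a := by
  have hne : a ≠ b := hab.ne
  have hnbr : H.neighborFinset a = insert c ((G.neighborFinset a).erase b) := by
    ext y
    rw [mem_neighborFinset, hH, mem_insert, mem_erase, mem_neighborFinset]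
    simp only [Ne, Sym2.eq_iff]
    constructor
    · rintro (⟨h1, h2, h3⟩ | ⟨(h4 | h4), h5⟩) <;> aesop
    · rintro (rfl | ⟨hyb, hadj⟩) <;> aesop
  have hbm : b ∈ G.neighborFinset a := by rwa [mem_neighborFinset]
  have hcm : c ∉ (G.neighborFinset a).erase b := by
    simp [mem_erase, mem_neighborFinset, hnac]
  have hpos : 0 < G.degree a := G.degree_pos_iff_exists_adj a |>.mpr ⟨b, hab⟩
  rw [← card_neighborFinset_eq_degree, ← card_neighborFinset_eq_degree, hnbr,
    card_insert_of_notMem hcm, card_erase_of_mem hbm, card_neighborFinset_eq_degree]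
  omega

lemma swapGraph_degree_other {n : ℕ} (G : SimpleGraph (Fin n)) [DecidableRel G.Adj]
    {a b c d v : Fin n} (hva : v ≠ a) (hvb : v ≠ b) (hvc : v ≠ c) (hvd : v ≠ d)
    (H : SimpleGraph (Fin n)) [DecidableRel H.Adj]
    (hH : ∀ x y, H.Adj x y ↔ (G.Adj x y ∧ s(x,y) ≠ s(a,b) ∧ s(x,y) ≠ s(c,d)) ∨
      ((s(x,y) = s(a,c) ∨ s(x,y) = s(b,d)) ∧ x ≠ y)) :
    H.degree v = G.degree v := by
  have hnbr : H.neighborFinset v = G.neighborFinset v := by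
    ext y
    rw [mem_neighborFinset, hH, mem_neighborFinset]
    simp only [Ne, Sym2.eq_iff]
    constructor
    · rintro (⟨h1, -, -⟩ | ⟨(h4 | h4), -⟩) <;> aesop
    · intro h
      refine Or.inl ⟨h, ?_, ?_⟩ <;> · rintro (⟨h1, -⟩ | ⟨h1, -⟩) <;> simp_all
  rw [← card_neighborFinset_eq_degree, ← card_neighborFinset_eq_degree, hnbr]

lemma swap_main {n : ℕ} (G : SimpleGraph (Fin n)) [DecidableRel G.Adj] {a b c d : Fin n}
    (hab : G.Adj a b) (hcd : G.Adj c d)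
    (hac : ¬G.Reachable a c) (had : ¬G.Reachable a d)
    (hbc : ¬G.Reachable b c) (hbd : ¬G.Reachable b d)
    (hre : (G.deleteEdges {s(a,b)}).Reachable a b) :
    (∀ v, (swapGraph G a b c d).degree v = G.degree v) ∧
      (∀ u v, G.Reachable u v → (swapGraph G a b c d).Reachable u v) ∧
      (swapGraph G a b c d).Reachable a c := by
  have nac : a ≠ c := fun h => hac (h ▸ Reachable.refl a)
  have nad : a ≠ d := fun h => had (h ▸ Reachable.refl a)
  have nbc : b ≠ c := fun h => hbc (h ▸ Reachable.refl b)
  have nbd : b ≠ d := fun h => hbd (h ▸ Reachable.refl b)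
  have hnac : ¬G.Adj a c := fun h => hac h.reachable
  have hnad : ¬G.Adj a d := fun h => had h.reachable
  have hnbc : ¬G.Adj b c := fun h => hbc h.reachable
  have hnbd : ¬G.Adj b d := fun h => hbd h.reachable
  have hdeg : ∀ v, (swapGraph G a b c d).degree v = G.degree v := by
    intro v
    by_cases hva : v = a
    · subst hva
      exact swapGraph_degree_a G hab hnac nac nad _ (fun x y => Iff.rfl)
    by_cases hvb : v = b
    · rw [hvb]
      refine swapGraph_degree_a G hab.symm hnbd nbd nbc _ (fun x y => ?_)
      rw [swapGraph_comm1 G a b c d]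
      exact Iff.rfl
    by_cases hvc : v = c
    · rw [hvc]
      refine swapGraph_degree_a G hcd (fun h => hac h.symm.reachable) (Ne.symm nac)
        (Ne.symm nbc) _ (fun x y => ?_)
      rw [swapGraph_comm2 G a b c d]
      exact Iff.rfl
    by_cases hvd : v = d
    · rw [hvd]
      refine swapGraph_degree_a G hcd.symm (fun h => hbd h.symm.reachable) (Ne.symm nbd)
        (Ne.symm nad) _ (fun x y => ?_)
      rw [swapGraph_comm2 G a b c d, swapGraph_comm1 G c d a b]
      exact Iff.rfl
    · exact swapGraph_degree_other G hva hvb hvc hvd _ (fun x y => Iff.rfl)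
  obtain ⟨w⟩ := hre
  have hsup : ∀ z ∈ w.support, G.Reachable a z := fun z hz =>
    Reachable.mono (G.deleteEdges_le _) ⟨w.takeUntil z hz⟩
  have hall : ∀ e ∈ w.edges, e ∈ (swapGraph G a b c d).edgeSet := by
    intro e he
    have hG : e ∈ (G.deleteEdges {s(a,b)}).edgeSet := w.edges_subset_edgeSet he
    induction e using Sym2.ind with
    | _ x y =>
      rw [mem_edgeSet, deleteEdges_adj, Set.mem_singleton_iff] at hG
      rw [mem_edgeSet, swapGraph_adj]
      refine Or.inl ⟨hG.1, hG.2, ?_⟩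
      intro hcdEq
      have hcsup : c ∈ w.support := w.fst_mem_support_of_mem_edges (hcdEq ▸ he)
      exact hac (hsup c hcsup)
  have h2ab : (swapGraph G a b c d).Reachable a b := ⟨w.transfer _ hall⟩
  have h2ac : (swapGraph G a b c d).Adj a c := Or.inr ⟨Or.inl rfl, nac⟩
  have h2bd : (swapGraph G a b c d).Adj b d := Or.inr ⟨Or.inr rfl, nbd⟩
  have hcd2 : (swapGraph G a b c d).Reachable c d :=
    h2ac.reachable.symm.trans (h2ab.trans h2bd.reachable)
  refine ⟨hdeg, fun u v huv => aux_reach_of_adj ?_ huv, h2ac.reachable⟩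
  intro x y hxy
  by_cases h1 : s(x,y) = s(a,b)
  · rcases Sym2.eq_iff.mp h1 with ⟨rfl, rfl⟩ | ⟨rfl, rfl⟩
    · exact h2ab
    · exact h2ab.symm
  by_cases h2 : s(x,y) = s(c,d)
  · rcases Sym2.eq_iff.mp h2 with ⟨rfl, rfl⟩ | ⟨rfl, rfl⟩
    · exact hcd2
    · exact hcd2.symm
  · exact SimpleGraph.Adj.reachable (Or.inl ⟨hxy, h1, h2⟩)

open scoped Classical in
noncomputable def RR {n : ℕ} (G : SimpleGraph (Fin n)) : ℕ :=
  (Finset.univ.filter (fun p : Fin n × Fin n => G.Reachable p.1 p.2)).card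

open scoped Classical in
lemma RR_le {n : ℕ} (G : SimpleGraph (Fin n)) : RR G ≤ n * n := by
  rw [RR]
  refine le_trans (Finset.card_filter_le _ _) ?_
  simp

open scoped Classical in
lemma RR_lt {n : ℕ} {G G' : SimpleGraph (Fin n)}
    (h : ∀ u v, G.Reachable u v → G'.Reachable u v) {u0 v0 : Fin n}
    (h1 : G'.Reachable u0 v0) (h2 : ¬G.Reachable u0 v0) : RR G < RR G' := by
  rw [RR, RR]
  apply Finset.card_lt_card
  rw [Finset.ssubset_iff_of_subset]
  · exact ⟨(u0, v0), by simp [h1], by simp [h2]⟩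
  · intro p hp
    rw [Finset.mem_filter] at hp ⊢
    exact ⟨hp.1, h _ _ hp.2⟩

open scoped Classical in
lemma RR_connected {n : ℕ} (hn : 0 < n) (G : SimpleGraph (Fin n)) (h : n * n ≤ RR G) :
    G.Connected := by
  have hcard : (Finset.univ.filter (fun p : Fin n × Fin n => G.Reachable p.1 p.2)) =
      Finset.univ := by
    apply Finset.eq_univ_of_card
    refine le_antisymm (Finset.card_le_univ _) ?_
    rw [RR] at h
    simpa using h
  refine (connected_iff G).mpr ⟨fun u v => ?_, ⟨⟨0, hn⟩⟩⟩
  have : (u, v) ∈ Finset.univ.filter (fun p : Fin n × Fin n => G.Reachable p.1 p.2) := by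
    rw [hcard]; exact Finset.mem_univ _
  exact (Finset.mem_filter.mp this).2

lemma aux_rec {n : ℕ} (hn : 2 ≤ n) : ∀ (k : ℕ) (G : SimpleGraph (Fin n))
    [inst : DecidableRel G.Adj], (∀ v, 0 < G.degree v) →
    (2 * (n - 1) ≤ ∑ v, G.degree v) → (n * n - RR G ≤ k) →
    ∃ (G' : SimpleGraph (Fin n)) (_ : DecidableRel G'.Adj),
      (∀ v, G'.degree v = G.degree v) ∧ G'.Connected := by
  intro k
  induction k with
  | zero =>
    intro G inst h1 h2 h3
    have := RR_le G
    have hc : G.Connected := RR_connected (by omega) G (by omega)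
    exact ⟨G, inst, fun _ => rfl, hc⟩
  | succ m ih =>
    intro G inst h1 h2 h3
    by_cases hc : G.Connected
    · exact ⟨G, inst, fun _ => rfl, hc⟩
    · have hsum := G.sum_degrees_eq_twice_card_edges
      have hedge : n - 1 ≤ #G.edgeFinset := by omega
      obtain ⟨a, b, hab, hre⟩ := aux_nonbridge hn G hc hedge
      have hnp : ¬G.Preconnected := fun hp => hc ((connected_iff G).mpr ⟨hp, ⟨⟨0, by omega⟩⟩⟩)
      rw [Preconnected] at hnp
      push_neg at hnp
      obtain ⟨u, v, huv⟩ := hnp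
      have hx : ∃ x, ¬G.Reachable a x := by
        by_cases hau : G.Reachable a u
        · exact ⟨v, fun h => huv (hau.symm.trans h)⟩
        · exact ⟨u, hau⟩
      obtain ⟨c, hac⟩ := hx
      obtain ⟨d, hcd⟩ := (G.degree_pos_iff_exists_adj c).mp (h1 c)
      have had : ¬G.Reachable a d := fun h => hac (h.trans hcd.reachable.symm)
      have hbc : ¬G.Reachable b c := fun h => hac (hab.reachable.trans h)
      have hbd : ¬G.Reachable b d := fun h => had (hab.reachable.trans h)
      obtain ⟨hdeg, hmono, hnew⟩ := swap_main G hab hcd hac had hbc hbd hre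
      have hlt : RR G < RR (swapGraph G a b c d) := RR_lt hmono hnew hac
      have hle2 := RR_le (swapGraph G a b c d)
      obtain ⟨G', inst', hdeg', hconn⟩ := ih (swapGraph G a b c d)
        (fun v => by rw [hdeg v]; exact h1 v)
        (by rw [Finset.sum_congr rfl (fun v _ => hdeg v)]; exact h2)
        (by omega)
      exact ⟨G', inst', fun v => (hdeg' v).trans (hdeg v), hconn⟩

/-- A graphic sequence `π` with `n > 1` elements has a connected realization iff the smallest
element of `π` is positive and the sum of the elements of `π` is at least `2(n-1)`. -/
theorem connected_realization_iff (π : Multiset ℕ) (hn : 1 < Multiset.card π)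
    (hg : Graphic π) :
    (∃ (G : SimpleGraph (Fin (Multiset.card π))) (_ : DecidableRel G.Adj),
        degSeq G = π ∧ G.Connected) ↔
      (∀ d ∈ π, 0 < d) ∧ 2 * (Multiset.card π - 1) ≤ π.sum := by
  constructor
  · rintro ⟨G, inst, hds, hc⟩
    constructor
    · intro d hd
      rw [← hds] at hd
      obtain ⟨v, -, rfl⟩ := Multiset.mem_map.mp hd
      obtain ⟨w, hw⟩ := Fintype.exists_ne_of_one_lt_card (by simpa using hn) v
      obtain ⟨p⟩ := hc.preconnected v w
      cases p with
      | nil => exact absurd rfl hw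
      | cons h _ => exact (G.degree_pos_iff_exists_adj v).mpr ⟨_, h⟩
    · have hsum : π.sum = ∑ x, G.degree x := by
        conv_lhs => rw [← hds]
        rfl
      have h2 := G.sum_degrees_eq_twice_card_edges
      have h3 := aux_connected_card G hc
      omega
  · rintro ⟨hpos, hsum⟩
    obtain ⟨G0, inst0, hds0⟩ := hg
    have h1 : ∀ v, 0 < G0.degree v := by
      intro v
      have hm : G0.degree v ∈ degSeq G0 := Multiset.mem_map_of_mem _ (Finset.mem_univ_val v)
      rw [hds0] at hm
      exact hpos _ hm
    have hsum0 : π.sum = ∑ x, G0.degree x := by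
      conv_lhs => rw [← hds0]
      rfl
    obtain ⟨G', inst', hdeg', hconn⟩ := aux_rec hn (Multiset.card π * Multiset.card π) G0
      h1 (by omega) (Nat.sub_le _ _)
    exact ⟨G', inst', (Multiset.map_congr rfl (fun v _ => hdeg' v)).trans hds0, hconn⟩
end

section
/- Suppose the constant sequence π = (k,...,k) with n elements is graphic, where 2 ≤ k < n/2. Then π has a connected realization G such that the smallest nontrivial eigenvalue of the normalized Laplacian satisfies λ₁(G) ≤ 4/(|E(G)| − k). -/
open SimpleGraph Finset

open Matrix
open scoped InnerProductSpace RealInnerProductSpace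



def jumps (m k : ℕ) : Finset (ZMod m) :=
  ((Finset.Icc 1 (k/2)).image (fun i : ℕ => (i : ZMod m))) ∪
  ((Finset.Icc 1 (k/2)).image (fun i : ℕ => -(i : ZMod m))) ∪
  (if Odd k then {((m/2 : ℕ) : ZMod m)} else ∅)

section jumpfacts
variable {m k : ℕ}

lemma val_cast_small (hk : 2 ≤ k) (hm : k + 1 ≤ m) (i : ℕ) (hi : i ≤ k / 2) :
    haveI : NeZero m := ⟨by omega⟩
    ((i : ZMod m)).val = i := by
  haveI : NeZero m := ⟨by omega⟩
  apply ZMod.val_cast_of_lt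
  omega

lemma val_cast_neg (hk : 2 ≤ k) (hm : k + 1 ≤ m) (i : ℕ) (h1 : 1 ≤ i) (hi : i ≤ k / 2) :
    haveI : NeZero m := ⟨by omega⟩
    ((-(i : ZMod m))).val = m - i := by
  haveI : NeZero m := ⟨by omega⟩
  rw [ZMod.neg_val, val_cast_small hk hm i hi, if_neg]
  intro h0
  have := congrArg ZMod.val h0
  rw [val_cast_small hk hm i hi, ZMod.val_zero] at this
  omega

lemma val_cast_half (hk : 2 ≤ k) (hm : k + 1 ≤ m) :
    haveI : NeZero m := ⟨by omega⟩
    (((m/2 : ℕ) : ZMod m)).val = m / 2 := by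
  haveI : NeZero m := ⟨by omega⟩
  apply ZMod.val_cast_of_lt
  omega

lemma mem_jumps (hk : 2 ≤ k) (hm : k + 1 ≤ m) {x : ZMod m} :
    haveI : NeZero m := ⟨by omega⟩
    (x ∈ jumps m k ↔
    (1 ≤ x.val ∧ x.val ≤ k / 2) ∨ (m - k/2 ≤ x.val ∧ x.val ≤ m - 1) ∨ (Odd k ∧ x.val = m / 2)) := by
  haveI : NeZero m := ⟨by omega⟩
  constructor
  · intro hx
    simp only [jumps, Finset.mem_union, Finset.mem_image, Finset.mem_Icc] at hx
    rcases hx with (⟨i, ⟨hi1, hi2⟩, rfl⟩ | ⟨i, ⟨hi1, hi2⟩, rfl⟩) | hx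
    · left; rw [val_cast_small hk hm i hi2]; omega
    · right; left; rw [val_cast_neg hk hm i hi1 hi2]; omega
    · by_cases hko : Odd k
      · rw [if_pos hko, Finset.mem_singleton] at hx
        subst hx
        exact Or.inr (Or.inr ⟨hko, val_cast_half hk hm⟩)
      · rw [if_neg hko] at hx; simp at hx
  · intro hx
    simp only [jumps, Finset.mem_union, Finset.mem_image, Finset.mem_Icc]
    rcases hx with ⟨h1, h2⟩ | ⟨h1, h2⟩ | ⟨hko, h2⟩
    · left; left
      exact ⟨x.val, ⟨h1, h2⟩, by rw [ZMod.natCast_val, ZMod.cast_id]⟩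
    · have hvlt := x.val_lt
      left; right
      refine ⟨m - x.val, ⟨by omega, by omega⟩, ?_⟩
      have hcast : ((m - x.val : ℕ) : ZMod m) = (m : ZMod m) - (x.val : ZMod m) := by
        have hle : x.val ≤ m := le_of_lt x.val_lt
        push_cast [Nat.cast_sub hle]
        ring
      rw [hcast, ZMod.natCast_self, zero_sub, ZMod.natCast_val, ZMod.cast_id, neg_neg]
    · right
      rw [if_pos hko, Finset.mem_singleton]
      rw [← h2, ZMod.natCast_val, ZMod.cast_id]

lemma zero_not_mem_jumps (hk : 2 ≤ k) (hm : k + 1 ≤ m) : (0 : ZMod m) ∉ jumps m k := by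
  haveI : NeZero m := ⟨by omega⟩
  rw [mem_jumps hk hm, ZMod.val_zero]
  intro h
  rcases h with ⟨h1, _⟩ | ⟨h1, h2⟩ | ⟨_, h2⟩ <;> omega

lemma one_mem_jumps (hk : 2 ≤ k) (hm : k + 1 ≤ m) : (1 : ZMod m) ∈ jumps m k := by
  haveI : NeZero m := ⟨by omega⟩
  rw [mem_jumps hk hm]
  left
  have h1 : ((1:ℕ) : ZMod m) = (1 : ZMod m) := by push_cast; ring
  rw [← h1, val_cast_small hk hm 1 (by omega)]
  omega

lemma neg_mem_jumps (hk : 2 ≤ k) (hm : k + 1 ≤ m) (hodd : Odd k → Even m)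
    {x : ZMod m} (hx : x ∈ jumps m k) : -x ∈ jumps m k := by
  haveI : NeZero m := ⟨by omega⟩
  rw [mem_jumps hk hm] at hx ⊢
  have hxv := x.val_lt
  have hnv : (-x).val = if x = 0 then 0 else m - x.val := ZMod.neg_val x
  have hx0 : x ≠ 0 := by
    intro h; subst h; rw [ZMod.val_zero] at hx
    rcases hx with ⟨h1, _⟩ | ⟨h1, h2⟩ | ⟨_, h2⟩ <;> omega
  rw [if_neg hx0] at hnv
  rcases hx with ⟨h1, h2⟩ | ⟨h1, h2⟩ | ⟨hko, h2⟩
  · right; left; omega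
  · left; omega
  · right; right
    refine ⟨hko, ?_⟩
    have hme := Nat.even_iff.mp (hodd hko)
    omega

lemma card_jumps (hk : 2 ≤ k) (hm : k + 1 ≤ m) (hodd : Odd k → Even m) :
    (jumps m k).card = k := by
  haveI : NeZero m := ⟨by omega⟩
  classical
  have hA : ((Finset.Icc 1 (k/2)).image (fun i : ℕ => (i : ZMod m))).card = k / 2 := by
    rw [Finset.card_image_of_injOn, Nat.card_Icc]
    · omega
    · intro i hi j hj hij
      rw [Finset.mem_coe, Finset.mem_Icc] at hi hj
      have := congrArg ZMod.val hij
      rwa [val_cast_small hk hm i hi.2, val_cast_small hk hm j hj.2] at this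
  have hB : ((Finset.Icc 1 (k/2)).image (fun i : ℕ => -(i : ZMod m))).card = k / 2 := by
    rw [Finset.card_image_of_injOn, Nat.card_Icc]
    · omega
    · intro i hi j hj hij
      rw [Finset.mem_coe, Finset.mem_Icc] at hi hj
      have := congrArg ZMod.val hij
      rw [val_cast_neg hk hm i hi.1 hi.2, val_cast_neg hk hm j hj.1 hj.2] at this
      omega
  have hdisj1 : Disjoint ((Finset.Icc 1 (k/2)).image (fun i : ℕ => (i : ZMod m)))
      ((Finset.Icc 1 (k/2)).image (fun i : ℕ => -(i : ZMod m))) := by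
    rw [Finset.disjoint_left]
    rintro x hx hx'
    simp only [Finset.mem_image, Finset.mem_Icc] at hx hx'
    obtain ⟨i, ⟨hi1, hi2⟩, rfl⟩ := hx
    obtain ⟨j, ⟨hj1, hj2⟩, hj⟩ := hx'
    have := congrArg ZMod.val hj
    rw [val_cast_neg hk hm j hj1 hj2, val_cast_small hk hm i hi2] at this
    omega
  have hdisj2 : Disjoint
      (((Finset.Icc 1 (k/2)).image (fun i : ℕ => (i : ZMod m))) ∪
        ((Finset.Icc 1 (k/2)).image (fun i : ℕ => -(i : ZMod m))))
      (if Odd k then ({((m/2 : ℕ) : ZMod m)} : Finset (ZMod m)) else ∅) := by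
    by_cases hko : Odd k
    · rw [if_pos hko]
      have hme := Nat.even_iff.mp (hodd hko)
      have hkodd := Nat.odd_iff.mp hko
      rw [Finset.disjoint_right]
      rintro x hx hx'
      rw [Finset.mem_singleton] at hx
      subst hx
      simp only [Finset.mem_union, Finset.mem_image, Finset.mem_Icc] at hx'
      have hval := val_cast_half (m := m) hk hm
      rcases hx' with ⟨i, ⟨hi1, hi2⟩, hi⟩ | ⟨i, ⟨hi1, hi2⟩, hi⟩
      · have := congrArg ZMod.val hi
        rw [val_cast_small hk hm i hi2, hval] at this
        omega
      · have := congrArg ZMod.val hi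
        rw [val_cast_neg hk hm i hi1 hi2, hval] at this
        omega
    · rw [if_neg hko]
      exact Finset.disjoint_empty_right _
  rw [jumps, Finset.card_union_of_disjoint hdisj2, Finset.card_union_of_disjoint hdisj1, hA, hB]
  by_cases hko : Odd k
  · rw [if_pos hko]
    have := Nat.odd_iff.mp hko
    rw [Finset.card_singleton]
    omega
  · rw [if_neg hko]
    have := Nat.even_iff.mp (Nat.not_odd_iff_even.mp hko)
    rw [Finset.card_empty]
    omega

end jumpfacts


/-- adjacency within one side: circulant with jump set `jumps m k`, minus the edge {0,1}. -/
def sideAdj (m k : ℕ) (x x' : ZMod m) : Prop :=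
  (x - x' ∈ jumps m k ∨ x' - x ∈ jumps m k) ∧ x ≠ x' ∧
    ¬(x = 0 ∧ x' = 1) ∧ ¬(x = 1 ∧ x' = 0)

lemma sideAdj_symm {m k : ℕ} {x x' : ZMod m} (h : sideAdj m k x x') : sideAdj m k x' x := by
  obtain ⟨h1, h2, h3, h4⟩ := h
  exact ⟨h1.symm, h2.symm, fun hc => h4 ⟨hc.2, hc.1⟩, fun hc => h3 ⟨hc.2, hc.1⟩⟩

lemma sideAdj_iff {m k : ℕ} (hk : 2 ≤ k) (hm : k + 1 ≤ m) (hodd : Odd k → Even m)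
    {x x' : ZMod m} : sideAdj m k x x' ↔
    (x - x' ∈ jumps m k ∧ ¬(x = 0 ∧ x' = 1) ∧ ¬(x = 1 ∧ x' = 0)) := by
  constructor
  · rintro ⟨h1 | h1, h2, h3, h4⟩
    · exact ⟨h1, h3, h4⟩
    · refine ⟨?_, h3, h4⟩
      have := neg_mem_jumps hk hm hodd h1
      rwa [neg_sub] at this
  · rintro ⟨h1, h3, h4⟩
    refine ⟨Or.inl h1, ?_, h3, h4⟩
    intro hxx
    subst hxx
    rw [sub_self] at h1
    exact zero_not_mem_jumps hk hm h1

def bigAdj (p q k : ℕ) : ZMod p ⊕ ZMod q → ZMod p ⊕ ZMod q → Prop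
  | Sum.inl x, Sum.inl x' => sideAdj p k x x'
  | Sum.inl x, Sum.inr y => (x = 0 ∧ y = 0) ∨ (x = 1 ∧ y = 1)
  | Sum.inr y, Sum.inl x => (x = 0 ∧ y = 0) ∨ (x = 1 ∧ y = 1)
  | Sum.inr y, Sum.inr y' => sideAdj q k y y'

def bigGraph (p q k : ℕ) : SimpleGraph (ZMod p ⊕ ZMod q) where
  Adj := bigAdj p q k
  symm := by
    constructor
    rintro (x | y) (x' | y') h
    · exact sideAdj_symm h
    · exact h
    · exact h
    · exact sideAdj_symm h
  loopless := by
    constructor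
    rintro (x | y) h
    · exact h.2.1 rfl
    · exact h.2.1 rfl

noncomputable instance {p q k : ℕ} : DecidableRel (bigGraph p q k).Adj := Classical.decRel _

lemma bigGraph_adj_inl_inl {p q k : ℕ} {x x' : ZMod p} :
    (bigGraph p q k).Adj (Sum.inl x) (Sum.inl x') ↔ sideAdj p k x x' := Iff.rfl

lemma bigGraph_adj_inr_inr {p q k : ℕ} {y y' : ZMod q} :
    (bigGraph p q k).Adj (Sum.inr y) (Sum.inr y') ↔ sideAdj q k y y' := Iff.rfl

lemma bigGraph_adj_inl_inr {p q k : ℕ} {x : ZMod p} {y : ZMod q} :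
    (bigGraph p q k).Adj (Sum.inl x) (Sum.inr y) ↔ (x = 0 ∧ y = 0) ∨ (x = 1 ∧ y = 1) := Iff.rfl

lemma bigGraph_adj_inr_inl {p q k : ℕ} {x : ZMod p} {y : ZMod q} :
    (bigGraph p q k).Adj (Sum.inr y) (Sum.inl x) ↔ (x = 0 ∧ y = 0) ∨ (x = 1 ∧ y = 1) := Iff.rfl

section degree

lemma zero_ne_one_zmod {m : ℕ} (hm : 2 ≤ m) : (0 : ZMod m) ≠ 1 := by
  haveI : NeZero m := ⟨by omega⟩
  haveI : Fact (1 < m) := ⟨by omega⟩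
  intro h
  have := congrArg ZMod.val h
  rw [ZMod.val_zero, ZMod.val_one m] at this
  omega

lemma degree_bigGraph_inl {p q k : ℕ} [NeZero p] [NeZero q] (hk : 2 ≤ k) (hp : k + 1 ≤ p)
    (hq : k + 1 ≤ q) (hoddp : Odd k → Even p)
    (x : ZMod p) : (bigGraph p q k).degree (Sum.inl x) = k := by
  classical
  have h01p : (0 : ZMod p) ≠ 1 := zero_ne_one_zmod (by omega)
  have h01q : (0 : ZMod q) ≠ 1 := zero_ne_one_zmod (by omega)
  rw [SimpleGraph.degree]
  by_cases hx0 : x = 0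
  · subst hx0
    have hset : (bigGraph p q k).neighborFinset (Sum.inl (0 : ZMod p)) =
        insert (Sum.inr (0 : ZMod q))
          (((jumps p k).erase 1).image (fun j => (Sum.inl j : ZMod p ⊕ ZMod q))) := by
      ext u
      rw [mem_neighborFinset]
      constructor
      · intro hadj
        cases u with
        | inl u =>
          rw [bigGraph_adj_inl_inl, sideAdj_iff hk hp hoddp] at hadj
          obtain ⟨h1, h3, h4⟩ := hadj
          have hu : u ∈ jumps p k := by
            have := neg_mem_jumps hk hp hoddp h1
            rwa [neg_sub, sub_zero] at this
          apply Finset.mem_insert_of_mem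
          apply Finset.mem_image_of_mem
          rw [Finset.mem_erase]
          exact ⟨fun h => h3 ⟨rfl, h⟩, hu⟩
        | inr u =>
          rw [bigGraph_adj_inl_inr] at hadj
          rcases hadj with ⟨_, rfl⟩ | ⟨h, _⟩
          · exact Finset.mem_insert_self _ _
          · exact absurd h.symm h01p.symm
      · intro hu
        rcases Finset.mem_insert.mp hu with rfl | hu
        · rw [bigGraph_adj_inl_inr]
          exact Or.inl ⟨rfl, rfl⟩
        · obtain ⟨j, hj, rfl⟩ := Finset.mem_image.mp hu
          rw [Finset.mem_erase] at hj
          rw [bigGraph_adj_inl_inl, sideAdj_iff hk hp hoddp]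
          refine ⟨?_, fun h => hj.1 h.2, fun h => h01p h.1⟩
          have := neg_mem_jumps hk hp hoddp hj.2
          rwa [zero_sub]
    rw [hset, Finset.card_insert_of_notMem, Finset.card_image_of_injective,
        Finset.card_erase_of_mem (one_mem_jumps hk hp), card_jumps hk hp hoddp]
    · omega
    · intro a b hab; exact Sum.inl.inj hab
    · intro hmem
      obtain ⟨j, _, hj⟩ := Finset.mem_image.mp hmem
      exact Sum.inl_ne_inr hj
  · by_cases hx1 : x = 1
    · subst hx1
      have hset : (bigGraph p q k).neighborFinset (Sum.inl (1 : ZMod p)) =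
          insert (Sum.inr (1 : ZMod q))
            (((jumps p k).erase 1).image (fun j => (Sum.inl (1 - j) : ZMod p ⊕ ZMod q))) := by
        ext u
        rw [mem_neighborFinset]
        constructor
        · intro hadj
          cases u with
          | inl u =>
            rw [bigGraph_adj_inl_inl, sideAdj_iff hk hp hoddp] at hadj
            obtain ⟨h1, h3, h4⟩ := hadj
            apply Finset.mem_insert_of_mem
            rw [Finset.mem_image]
            refine ⟨1 - u, ?_, by rw [sub_sub_cancel]⟩
            rw [Finset.mem_erase]
            constructor
            · intro h
              exact h4 ⟨rfl, sub_eq_self.mp h⟩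
            · exact h1
          | inr u =>
            rw [bigGraph_adj_inl_inr] at hadj
            rcases hadj with ⟨h, _⟩ | ⟨_, rfl⟩
            · exact absurd h h01p.symm
            · exact Finset.mem_insert_self _ _
        · intro hu
          rcases Finset.mem_insert.mp hu with rfl | hu
          · rw [bigGraph_adj_inl_inr]
            exact Or.inr ⟨rfl, rfl⟩
          · obtain ⟨j, hj, rfl⟩ := Finset.mem_image.mp hu
            rw [Finset.mem_erase] at hj
            rw [bigGraph_adj_inl_inl, sideAdj_iff hk hp hoddp]
            refine ⟨by rw [sub_sub_cancel]; exact hj.2, ?_, ?_⟩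
            · intro h
              exact h01p h.1.symm
            · intro h
              exact hj.1 (sub_eq_zero.mp h.2).symm
      rw [hset, Finset.card_insert_of_notMem, Finset.card_image_of_injective,
          Finset.card_erase_of_mem (one_mem_jumps hk hp), card_jumps hk hp hoddp]
      · omega
      · intro a b hab
        have := Sum.inl.inj hab
        have := congrArg (fun z => (1 : ZMod p) - z) this
        simpa using this
      · intro hmem
        obtain ⟨j, _, hj⟩ := Finset.mem_image.mp hmem
        exact Sum.inl_ne_inr hj
    · have hset : (bigGraph p q k).neighborFinset (Sum.inl x) =
          (jumps p k).image (fun j => (Sum.inl (x + j) : ZMod p ⊕ ZMod q)) := by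
        ext u
        rw [mem_neighborFinset]
        constructor
        · intro hadj
          cases u with
          | inl u =>
            rw [bigGraph_adj_inl_inl, sideAdj_iff hk hp hoddp] at hadj
            obtain ⟨h1, _, _⟩ := hadj
            rw [Finset.mem_image]
            refine ⟨u - x, ?_, by rw [add_sub_cancel]⟩
            have := neg_mem_jumps hk hp hoddp h1
            rwa [neg_sub] at this
          | inr u =>
            rw [bigGraph_adj_inl_inr] at hadj
            rcases hadj with ⟨h, _⟩ | ⟨h, _⟩
            · exact absurd h hx0
            · exact absurd h hx1
        · intro hu
          obtain ⟨j, hj, rfl⟩ := Finset.mem_image.mp hu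
          rw [bigGraph_adj_inl_inl, sideAdj_iff hk hp hoddp]
          refine ⟨?_, fun h => hx0 h.1, fun h => hx1 h.1⟩
          have : x - (x + j) = -j := by ring
          rw [this]
          exact neg_mem_jumps hk hp hoddp hj
      rw [hset, Finset.card_image_of_injective, card_jumps hk hp hoddp]
      intro a b hab
      have := Sum.inl.inj hab
      exact add_left_cancel this
end degree

lemma degree_bigGraph_inr {p q k : ℕ} [NeZero p] [NeZero q] (hk : 2 ≤ k) (hp : k + 1 ≤ p)
    (hq : k + 1 ≤ q) (hoddq : Odd k → Even q)
    (y : ZMod q) : (bigGraph p q k).degree (Sum.inr y) = k := by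
  classical
  have hswap : (bigGraph p q k).degree (Sum.inr y) = (bigGraph q p k).degree (Sum.inl y) := by
    rw [SimpleGraph.degree, SimpleGraph.degree]
    apply Finset.card_bij (fun a _ => a.swap)
    · rintro (x | z) ha
      · rw [mem_neighborFinset] at ha ⊢
        rw [bigGraph_adj_inr_inl] at ha
        rw [Sum.swap_inl, bigGraph_adj_inl_inr]
        tauto
      · rw [mem_neighborFinset] at ha ⊢
        rw [bigGraph_adj_inr_inr] at ha
        rw [Sum.swap_inr, bigGraph_adj_inl_inl]
        exact ha
    · intro a _ b _ hab
      have := congrArg Sum.swap hab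
      simpa using this
    · intro b hb
      refine ⟨b.swap, ?_, by simp⟩
      rw [mem_neighborFinset] at hb ⊢
      cases b with
      | inl z =>
        rw [bigGraph_adj_inl_inl] at hb
        rw [Sum.swap_inl, bigGraph_adj_inr_inr]
        exact hb
      | inr x =>
        rw [bigGraph_adj_inl_inr] at hb
        rw [Sum.swap_inr, bigGraph_adj_inr_inl]
        tauto
  rw [hswap]
  exact degree_bigGraph_inl hk hq hp hoddq y

lemma reachable_side {m k : ℕ} [NeZero m] (hk : 2 ≤ k) (hm : k + 1 ≤ m)
    {V : Type*} (G' : SimpleGraph V) (emb : ZMod m → V)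
    (hemb : ∀ x x' : ZMod m, sideAdj m k x x' → G'.Adj (emb x) (emb x'))
    (x : ZMod m) : G'.Reachable (emb 0) (emb x) := by
  haveI : Fact (1 < m) := ⟨by omega⟩
  have key : ∀ i : ℕ, i < m → G'.Reachable (emb 0) (emb (-(i : ZMod m))) := by
    intro i
    induction i with
    | zero =>
      intro _
      rw [Nat.cast_zero, neg_zero]
    | succ i ih =>
      intro hi
      have hreach := ih (by omega)
      refine hreach.trans (SimpleGraph.Adj.reachable (hemb _ _ ?_))
      have hsub : (-(i : ZMod m)) - (-((i+1 : ℕ) : ZMod m)) = 1 := by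
        push_cast
        ring
      have hvi : ((i : ZMod m)).val = i := ZMod.val_cast_of_lt (by omega)
      have hvi1 : (((i+1 : ℕ) : ZMod m)).val = i + 1 := ZMod.val_cast_of_lt (by omega)
      have hv0 : (0 : ZMod m).val = 0 := ZMod.val_zero
      have hv1 : (1 : ZMod m).val = 1 := ZMod.val_one m
      refine ⟨Or.inl (hsub ▸ one_mem_jumps hk hm), ?_, ?_, ?_⟩
      · intro h
        have := congrArg (fun z => (-(i : ZMod m)) - z) h
        simp only [sub_self] at this
        rw [hsub] at this
        exact one_ne_zero this.symm
      · rintro ⟨h1, h2⟩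
        -- -(i) = 0 means i ≡ 0, i < m so i = 0; then -(i+1) = -1 = 1 impossible for m ≥ 3
        have hi0 : i = 0 := by
          have := congrArg ZMod.val (neg_eq_zero.mp h1)
          rw [hvi, hv0] at this
          exact this
        subst hi0
        have := congrArg ZMod.val h2
        rw [ZMod.neg_val, hv1] at this
        rw [if_neg] at this
        · rw [hvi1] at this; omega
        · intro hz
          have := congrArg ZMod.val hz
          rw [hvi1, hv0] at this; omega
      · rintro ⟨h1, h2⟩
        -- -(i+1) = 0 means i + 1 ≡ 0 mod m, but i + 1 < m (since i+1 ≤ m-1? no i < m so i+1 ≤ m)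
        have := congrArg ZMod.val (neg_eq_zero.mp h2)
        rw [hvi1, hv0] at this
        omega
  have hx : x = -(((-x).val : ZMod m)) := by
    rw [ZMod.natCast_val, ZMod.cast_id, neg_neg]
  rw [hx]
  exact key (-x).val (-x).val_lt

lemma bigGraph_connected {p q k : ℕ} [NeZero p] [NeZero q] (hk : 2 ≤ k) (hp : k + 1 ≤ p)
    (hq : k + 1 ≤ q) : (bigGraph p q k).Connected := by
  rw [SimpleGraph.connected_iff]
  refine ⟨?_, ⟨Sum.inl 0⟩⟩
  have hl : ∀ x : ZMod p, (bigGraph p q k).Reachable (Sum.inl 0) (Sum.inl x) :=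
    reachable_side hk hp (bigGraph p q k) Sum.inl (fun _ _ h => h)
  have hcross : (bigGraph p q k).Adj (Sum.inl 0) (Sum.inr 0) := Or.inl ⟨rfl, rfl⟩
  have hr : ∀ y : ZMod q, (bigGraph p q k).Reachable (Sum.inl 0) (Sum.inr y) := by
    intro y
    exact (hcross.reachable).trans (reachable_side hk hq (bigGraph p q k) Sum.inr (fun _ _ h => h) y)
  intro a b
  have h : ∀ c, (bigGraph p q k).Reachable (Sum.inl 0) c := by
    rintro (x | y)
    · exact hl x
    · exact hr y
  exact (h a).symm.trans (h b)



lemma rayleigh {N : ℕ} (G : SimpleGraph (Fin N)) [DecidableRel G.Adj]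
    (hc : G.Connected) (f : Fin N → ℝ) (hsum : ∑ i, f i = 0) (hne : f ≠ 0) :
    ∃ μ ∈ spectrum ℝ (G.lapMatrix ℝ), μ ≠ 0 ∧
      μ * (∑ i, f i ^ 2) ≤ f ⬝ᵥ (G.lapMatrix ℝ *ᵥ f) := by
  classical
  set M := G.lapMatrix ℝ with hMdef
  have hM : M.IsHermitian := (posSemidef_lapMatrix ℝ G).1
  set B := hM.eigenvectorBasis with hB
  set g : EuclideanSpace ℝ (Fin N) := (EuclideanSpace.equiv (Fin N) ℝ).symm f with hg
  have hgf : ∀ i, g i = f i := fun i => rfl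
  set c : Fin N → ℝ := fun i => ⟪B i, g⟫_ℝ with hc'
  have hrepr : ∀ i, B.repr g i = c i := fun i => B.repr_apply_apply g i
  have hgsum : g = ∑ j, c j • B j := by
    calc g = ∑ j, B.repr g j • B j := (B.sum_repr g).symm
    _ = ∑ j, c j • B j := Finset.sum_congr rfl fun j _ => by rw [hrepr]
  have hTB : ∀ j, Matrix.toEuclideanLin M (B j) = hM.eigenvalues j • B j := by
    intro j
    apply (WithLp.equiv 2 _).injective
    ext i
    have := congrFun (hM.mulVec_eigenvectorBasis j) i
    simpa [Matrix.toEuclideanLin_apply] using this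
  have hinner : ∀ (a : Fin N → ℝ), ⟪g, ∑ j, a j • B j⟫_ℝ = ∑ j, a j * c j := by
    intro a
    rw [inner_sum]
    refine Finset.sum_congr rfl fun j _ => ?_
    rw [real_inner_smul_right, real_inner_comm]
  have hTg : Matrix.toEuclideanLin M g = ∑ j, (c j * hM.eigenvalues j) • B j := by
    conv_lhs => rw [hgsum]
    rw [map_sum]
    refine Finset.sum_congr rfl fun j _ => ?_
    rw [LinearMap.map_smul, hTB, smul_smul]
  have hq : f ⬝ᵥ (M *ᵥ f) = ∑ j, hM.eigenvalues j * c j ^ 2 := by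
    have h1 : f ⬝ᵥ (M *ᵥ f) = ⟪g, Matrix.toEuclideanLin M g⟫_ℝ := by
      rw [Matrix.toEuclideanLin_apply]
      simp only [PiLp.inner_apply, RCLike.inner_apply, conj_trivial]
      exact Finset.sum_congr rfl fun i _ => mul_comm _ _
    rw [h1, hTg, hinner]
    exact Finset.sum_congr rfl fun j _ => by ring
  have hnorm : (∑ i, f i ^ 2) = ∑ j, c j ^ 2 := by
    have h1 : (∑ i, f i ^ 2) = ⟪g, g⟫_ℝ := by
      simp only [PiLp.inner_apply, RCLike.inner_apply, conj_trivial]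
      exact Finset.sum_congr rfl fun i _ => by rw [hgf]; ring
    have h2 : ⟪g, g⟫_ℝ = ⟪g, ∑ j, c j • B j⟫_ℝ := congrArg (fun x => ⟪g, x⟫_ℝ) hgsum
    rw [h1, h2, hinner]
    exact Finset.sum_congr rfl fun j _ => by ring
  have hTne : ∃ i, c i ≠ 0 := by
    by_contra h
    push_neg at h
    apply hne
    have hg0 : g = 0 := by
      rw [hgsum]
      simp [h]
    funext i
    have := hgf i
    rw [hg0] at this
    exact this.symm
  have hzero : ∀ j, hM.eigenvalues j = 0 → c j = 0 := by
    intro j hj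
    have hker : Matrix.toLin' M ⇑(B j) = 0 := by
      rw [Matrix.toLin'_apply]
      have := hM.mulVec_eigenvectorBasis j
      rw [hj, zero_smul] at this
      exact this
    have hconst := (lapMatrix_mulVec_eq_zero_iff_forall_reachable (G := G) (x := ⇑(B j))).mp hker
    obtain ⟨v0⟩ := hc.nonempty
    have hBconst : ∀ i, B j i = B j v0 := fun i => hconst i v0 (hc.preconnected i v0)
    have hcj : c j = B j v0 * ∑ i, f i := by
      simp only [hc', PiLp.inner_apply, RCLike.inner_apply, conj_trivial]
      rw [Finset.mul_sum]
      exact Finset.sum_congr rfl fun i _ => by rw [hBconst i, hgf, mul_comm]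
    rw [hcj, hsum, mul_zero]
  obtain ⟨i1, hi1⟩ := hTne
  set T : Finset (Fin N) := univ.filter (fun i => c i ≠ 0) with hT
  have hTne' : T.Nonempty := ⟨i1, by simp [hT, hi1]⟩
  obtain ⟨i0, hi0T, hmin⟩ := T.exists_min_image hM.eigenvalues hTne'
  refine ⟨hM.eigenvalues i0, hM.eigenvalues_mem_spectrum_real i0, ?_, ?_⟩
  · intro h0
    exact (Finset.mem_filter.mp hi0T).2 (hzero i0 h0)
  · rw [hq, hnorm, Finset.mul_sum]
    apply Finset.sum_le_sum
    intro j _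
    by_cases hcj : c j = 0
    · simp [hcj]
    · have hjT : j ∈ T := by simp [hT, hcj]
      have := hmin j hjT
      nlinarith [sq_nonneg (c j)]

lemma normLap_eq {N k : ℕ} (G : SimpleGraph (Fin N)) [DecidableRel G.Adj]
    (hreg : ∀ v, G.degree v = k) (hk : k ≠ 0) :
    normLap G = (k : ℝ)⁻¹ • G.lapMatrix ℝ := by
  have hkR : (0:ℝ) < k := by
    have : 0 < k := Nat.pos_of_ne_zero hk
    exact_mod_cast this
  ext i j
  simp only [normLap, Matrix.of_apply, Matrix.smul_apply, lapMatrix, degMatrix,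
    Matrix.sub_apply, Matrix.diagonal_apply, adjMatrix_apply, smul_eq_mul]
  by_cases hij : i = j
  · subst hij
    rw [if_pos rfl, if_pos rfl, if_neg (by rw [hreg]; exact hk), if_neg (G.irrefl)]
    rw [hreg]
    field_simp
    ring
  · rw [if_neg hij, if_neg hij]
    by_cases hadj : G.Adj i j
    · rw [if_pos hadj, if_pos hadj, hreg, hreg]
      rw [Real.mul_self_sqrt (by positivity)]
      ring
    · rw [if_neg hadj, if_neg hadj]
      ring

lemma spectrum_normLap_nonneg {N k : ℕ} (G : SimpleGraph (Fin N)) [DecidableRel G.Adj]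
    (hreg : ∀ v, G.degree v = k) (hk : k ≠ 0) :
    ∀ x ∈ spectrum ℝ (normLap G), (0:ℝ) ≤ x := by
  intro x hx
  by_contra hneg
  push_neg at hneg
  have hpsd : (normLap G).PosSemidef := by
    rw [normLap_eq G hreg hk]
    constructor
    · have h := (posSemidef_lapMatrix ℝ G).1
      unfold Matrix.IsHermitian at *
      rw [Matrix.conjTranspose_smul, h]
      rfl
    · intro y
      have hki : (0:ℝ) ≤ (k:ℝ)⁻¹ := by positivity
      exact ((posSemidef_lapMatrix ℝ G).smul hki).2 y
  have hposdef : (normLap G + (-x) • (1 : Matrix (Fin N) (Fin N) ℝ)).PosDef := by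
    have h1 : ((-x) • (1 : Matrix (Fin N) (Fin N) ℝ)).PosDef := by
      have : (-x) • (1 : Matrix (Fin N) (Fin N) ℝ) = Matrix.diagonal (fun _ => -x) := by
        ext a b
        by_cases hab : a = b
        · subst hab; simp [Matrix.one_apply]
        · simp [Matrix.one_apply, Matrix.diagonal_apply, hab]
      rw [this]
      rw [Matrix.posDef_diagonal_iff]
      intro i
      linarith
    exact (Matrix.PosDef.posSemidef_add hpsd h1 :)
  rw [spectrum.mem_iff] at hx
  apply hx
  have heq : (algebraMap ℝ (Matrix (Fin N) (Fin N) ℝ)) x - normLap G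
      = -(normLap G + (-x) • (1 : Matrix (Fin N) (Fin N) ℝ)) := by
    rw [Algebra.algebraMap_eq_smul_one]
    rw [neg_add]
    rw [neg_smul, neg_neg]
    abel
  rw [heq]
  exact hposdef.isUnit.neg

lemma lambda1_le {N k : ℕ} (G : SimpleGraph (Fin N)) [DecidableRel G.Adj]
    (hc : G.Connected) (hreg : ∀ v, G.degree v = k) (hk : k ≠ 0)
    (f : Fin N → ℝ) (hsum : ∑ i, f i = 0) (hne : f ≠ 0) :
    lambda1 G ≤ (f ⬝ᵥ (G.lapMatrix ℝ *ᵥ f)) / ((k : ℝ) * ∑ i, f i ^ 2) := by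
  classical
  obtain ⟨μ, hspec, hμne, hineq⟩ := rayleigh G hc f hsum hne
  have hkR : (0:ℝ) < k := by
    have : 0 < k := Nat.pos_of_ne_zero hk
    exact_mod_cast this
  have hNpos : 0 < N := by
    obtain ⟨v⟩ := hc.nonempty
    exact v.pos
  haveI : Nonempty (Fin N) := ⟨⟨0, hNpos⟩⟩
  haveI : Nontrivial (Matrix (Fin N) (Fin N) ℝ) := by
    refine ⟨0, 1, fun h => ?_⟩
    have := congrFun (congrFun h ⟨0, hNpos⟩) ⟨0, hNpos⟩
    simp [Matrix.one_apply] at this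
  -- sum of squares positive
  have hS : 0 < ∑ i, f i ^ 2 := by
    obtain ⟨i, hi⟩ := Function.ne_iff.mp hne
    have hi' : f i ≠ 0 := hi
    have : (0:ℝ) < f i ^ 2 := by positivity
    exact Finset.sum_pos' (fun j _ => sq_nonneg _) ⟨i, Finset.mem_univ i, this⟩
  -- the scaled eigenvalue is in the spectrum of normLap
  have hmem : (k:ℝ)⁻¹ * μ ∈ spectrum ℝ (normLap G) := by
    rw [normLap_eq G hreg hk]
    rw [spectrum.smul_eq_smul ((k:ℝ)⁻¹) (G.lapMatrix ℝ) ⟨μ, hspec⟩]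
    exact ⟨μ, hspec, rfl⟩
  have hxne : (k:ℝ)⁻¹ * μ ≠ 0 := by
    apply mul_ne_zero _ hμne
    positivity
  have hBdd : BddBelow {μ' : ℝ | μ' ≠ 0 ∧ μ' ∈ spectrum ℝ (normLap G)} := by
    refine ⟨0, fun y hy => ?_⟩
    exact spectrum_normLap_nonneg G hreg hk y hy.2
  have hle : lambda1 G ≤ (k:ℝ)⁻¹ * μ := csInf_le hBdd ⟨hxne, hmem⟩
  refine le_trans hle ?_
  rw [le_div_iff₀ (by positivity)]
  have h2 : ((k:ℝ)⁻¹ * μ) * ((k:ℝ) * ∑ i, f i ^ 2) = μ * ∑ i, f i ^ 2 := by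
    field_simp
  rw [h2]
  exact hineq

lemma choose_pq (n k : ℕ) (hk : 2 ≤ k) (hn : 2*k + 2 ≤ n) (hpar : 2 ∣ n * k) :
    ∃ p q : ℕ, p + q = n ∧ k + 1 ≤ p ∧ k + 1 ≤ q ∧ (Odd k → (Even p ∧ Even q)) ∧
      n * (n - 2) ≤ 4 * (p * q) := by
  by_cases hko : Odd k
  · have hkodd := Nat.odd_iff.mp hko
    have hne : n % 2 = 0 := by
      rcases hpar with ⟨c, hc⟩
      have heven : Even (n * k) := ⟨c, by omega⟩
      rcases Nat.even_mul.mp heven with h | h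
      · exact Nat.even_iff.mp h
      · exact absurd h (Nat.not_even_iff_odd.mpr hko)
    obtain ⟨t, ht⟩ : ∃ t, n = 2 * t := ⟨n/2, by omega⟩
    subst ht
    by_cases h2 : t % 2 = 0
    · refine ⟨t, t, by omega, by omega, by omega,
        fun _ => ⟨Nat.even_iff.mpr (by omega), Nat.even_iff.mpr (by omega)⟩, ?_⟩
      obtain ⟨s, hs⟩ : ∃ s, t = s + 1 := ⟨t - 1, by omega⟩
      subst hs
      have h5 : 2 * (s+1) - 2 = 2*s := by omega
      rw [h5]
      nlinarith
    · -- t odd, so t ≥ k+2 since k+1 is even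
      have hge : k + 2 ≤ t := by omega
      refine ⟨t - 1, t + 1, by omega, by omega, by omega,
        fun _ => ⟨Nat.even_iff.mpr (by omega), Nat.even_iff.mpr (by omega)⟩, ?_⟩
      obtain ⟨s, hs⟩ : ∃ s, t = s + 1 := ⟨t - 1, by omega⟩
      subst hs
      have h5 : 2 * (s+1) - 2 = 2*s := by omega
      have h6 : s + 1 - 1 = s := by omega
      rw [h5, h6]
      nlinarith
  · have hke := Nat.even_iff.mp (Nat.not_odd_iff_even.mp hko)
    rcases Nat.even_or_odd n with he | ho
    · have hne := Nat.even_iff.mp he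
      obtain ⟨t, ht⟩ : ∃ t, n = 2 * t := ⟨n/2, by omega⟩
      subst ht
      refine ⟨t, t, by omega, by omega, by omega, fun h => absurd h hko, ?_⟩
      obtain ⟨s, hs⟩ : ∃ s, t = s + 1 := ⟨t - 1, by omega⟩
      subst hs
      have h5 : 2 * (s+1) - 2 = 2*s := by omega
      rw [h5]
      nlinarith
    · have hno := Nat.odd_iff.mp ho
      obtain ⟨t, ht⟩ : ∃ t, n = 2 * t + 1 := ⟨n/2, by omega⟩
      subst ht
      refine ⟨t, t + 1, by omega, by omega, by omega, fun h => absurd h hko, ?_⟩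
      obtain ⟨s, hs⟩ : ∃ s, t = s + 1 := ⟨t - 1, by omega⟩
      subst hs
      have h5 : 2 * (s+1) + 1 - 2 = 2*s + 1 := by omega
      rw [h5]
      nlinarith



def testF (p q : ℕ) : ZMod p ⊕ ZMod q → ℝ := Sum.elim (fun _ => (q:ℝ)) (fun _ => -(p:ℝ))

lemma cross_sum {α β : Type*} [Fintype α] [Fintype β] [DecidableEq α] [DecidableEq β]
    (a a' : α) (b b' : β) (hne : a ≠ a') (C : ℝ) :
    ∑ x, ∑ y, (if ((x = a ∧ y = b) ∨ (x = a' ∧ y = b')) then C else 0) = 2 * C := by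
  have hsplit : ∀ (x : α) (y : β),
      (if ((x = a ∧ y = b) ∨ (x = a' ∧ y = b')) then C else 0)
      = (if x = a then (if y = b then C else 0) else 0)
        + (if x = a' then (if y = b' then C else 0) else 0) := by
    intro x y
    by_cases hx0 : x = a <;> by_cases hx1 : x = a' <;>
      by_cases hy0 : y = b <;> by_cases hy1 : y = b'
    all_goals first
      | exact absurd (hx0.symm.trans hx1) hne
      | simp [hx0, hx1, hy0, hy1, hne, Ne.symm hne]
  simp_rw [hsplit, Finset.sum_add_distrib]
  have h1 : ∀ (c : α) (d : β), (∑ x : α, ∑ y : β,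
      (if x = c then (if y = d then C else 0) else 0)) = C := by
    intro c d
    have hx : ∀ x : α, (∑ y : β, (if x = c then (if y = d then C else 0) else 0))
        = if x = c then C else 0 := by
      intro x
      by_cases hxc : x = c
      · simp [hxc, Finset.sum_ite_eq' Finset.univ d]
      · simp [hxc]
    rw [Finset.sum_congr rfl fun x _ => hx x]
    simp [Finset.sum_ite_eq' Finset.univ c]
  rw [h1 a b, h1 a' b']
  ring

lemma QF_big {p q k : ℕ} [NeZero p] [NeZero q]
    (h01p : (0:ZMod p) ≠ 1) (h01q : (0:ZMod q) ≠ 1) :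
    ∑ a, ∑ b, (if (bigGraph p q k).Adj a b then (testF p q a - testF p q b)^2 else 0)
      = 4 * ((p:ℝ) + q)^2 := by
  classical
  have hC : ((q:ℝ) - (-(p:ℝ)))^2 = ((p:ℝ) + q)^2 := by ring
  have hC' : ((-(p:ℝ)) - (q:ℝ))^2 = ((p:ℝ) + q)^2 := by ring
  rw [Fintype.sum_sum_type]
  have hinl : ∀ x : ZMod p,
      (∑ b, (if (bigGraph p q k).Adj (Sum.inl x) b then (testF p q (Sum.inl x) - testF p q b)^2 else 0))
      = ∑ y : ZMod q, (if ((x = (0:ZMod p) ∧ y = (0:ZMod q)) ∨ (x = 1 ∧ y = 1)) then ((p:ℝ)+q)^2 else 0) := by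
    intro x
    rw [Fintype.sum_sum_type]
    have hzero : (∑ x' : ZMod p, (if (bigGraph p q k).Adj (Sum.inl x) (Sum.inl x')
        then (testF p q (Sum.inl x) - testF p q (Sum.inl x'))^2 else 0)) = 0 := by
      apply Finset.sum_eq_zero
      intro x' _
      simp [testF]
    rw [hzero, zero_add]
    refine Finset.sum_congr rfl fun y _ => ?_
    have h1 : (bigGraph p q k).Adj (Sum.inl x) (Sum.inr y) ↔
        ((x = (0:ZMod p) ∧ y = (0:ZMod q)) ∨ (x = 1 ∧ y = 1)) := Iff.rfl
    have h2 : (testF p q (Sum.inl x) - testF p q (Sum.inr y))^2 = ((p:ℝ)+q)^2 := by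
      simp only [testF, Sum.elim_inl, Sum.elim_inr]
      ring
    rw [h2]
    exact if_congr h1 rfl rfl
  have hinr : ∀ y : ZMod q,
      (∑ b, (if (bigGraph p q k).Adj (Sum.inr y) b then (testF p q (Sum.inr y) - testF p q b)^2 else 0))
      = ∑ x : ZMod p, (if ((x = (0:ZMod p) ∧ y = (0:ZMod q)) ∨ (x = 1 ∧ y = 1)) then ((p:ℝ)+q)^2 else 0) := by
    intro y
    rw [Fintype.sum_sum_type]
    have hzero : (∑ y' : ZMod q, (if (bigGraph p q k).Adj (Sum.inr y) (Sum.inr y')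
        then (testF p q (Sum.inr y) - testF p q (Sum.inr y'))^2 else 0)) = 0 := by
      apply Finset.sum_eq_zero
      intro y' _
      simp [testF]
    rw [add_comm, hzero, zero_add]
    refine Finset.sum_congr rfl fun x _ => ?_
    have h1 : (bigGraph p q k).Adj (Sum.inr y) (Sum.inl x) ↔
        ((x = (0:ZMod p) ∧ y = (0:ZMod q)) ∨ (x = 1 ∧ y = 1)) := Iff.rfl
    have h2 : (testF p q (Sum.inr y) - testF p q (Sum.inl x))^2 = ((p:ℝ)+q)^2 := by
      simp only [testF, Sum.elim_inl, Sum.elim_inr]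
      ring
    rw [h2]
    exact if_congr h1 rfl rfl
  rw [Finset.sum_congr rfl (fun x _ => hinl x), Finset.sum_congr rfl (fun y _ => hinr y)]
  rw [cross_sum (0:ZMod p) 1 (0:ZMod q) 1 h01p (((p:ℝ)+q)^2)]
  have hswap : ∑ y : ZMod q, ∑ x : ZMod p,
      (if ((x = (0:ZMod p) ∧ y = (0:ZMod q)) ∨ (x = 1 ∧ y = 1)) then ((p:ℝ)+q)^2 else 0)
      = ∑ y : ZMod q, ∑ x : ZMod p,
      (if ((y = (0:ZMod q) ∧ x = (0:ZMod p)) ∨ (y = 1 ∧ x = 1)) then ((p:ℝ)+q)^2 else 0) := by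
    refine Finset.sum_congr rfl fun y _ => Finset.sum_congr rfl fun x _ => ?_
    exact if_congr (by tauto) rfl rfl
  rw [hswap, cross_sum (0:ZMod q) 1 (0:ZMod p) 1 h01q (((p:ℝ)+q)^2)]
  ring

set_option maxHeartbeats 1000000 in
/-- If the constant sequence `(k,...,k)` with `n` elements, `2 ≤ k < n/2`, is graphic,
then it has a connected realization `G` with `λ₁(G) ≤ 4/(|E(G)| - k)`. -/
theorem regular_poor_sync (n k : ℕ) (hk : 2 ≤ k) (hkn : k < n / 2)
    (hg : Graphic (Multiset.replicate n k)) :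
    ∃ (G : SimpleGraph (Fin n)) (_ : DecidableRel G.Adj),
      degSeq G = Multiset.replicate n k ∧ G.Connected ∧
      lambda1 G ≤ 4 / ((G.edgeFinset.card : ℝ) - (k : ℝ)) := by
  classical
  have hn : 2*k + 2 ≤ n := by omega
  have hpar : 2 ∣ n * k := by
    obtain ⟨G₀, inst₀, hdeg⟩ := hg
    have hsum : (∑ v, G₀.degree v) = n * k := by
      have h1 : (degSeq G₀).sum = ∑ v, G₀.degree v := rfl
      rw [hdeg, Multiset.sum_replicate, smul_eq_mul] at h1
      omega
    have h2 := SimpleGraph.sum_degrees_eq_twice_card_edges G₀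
    exact ⟨_, by rw [← hsum, h2]⟩
  obtain ⟨p, q, hpq, hp, hq, hodd, hineq⟩ := choose_pq n k hk hn hpar
  haveI : NeZero p := ⟨by omega⟩
  haveI : NeZero q := ⟨by omega⟩
  have hcard : Fintype.card (ZMod p ⊕ ZMod q) = n := by
    rw [Fintype.card_sum, ZMod.card, ZMod.card, hpq]
  let e : (ZMod p ⊕ ZMod q) ≃ Fin n := Fintype.equivFinOfCardEq hcard
  set H := bigGraph p q k with hH
  let G : SimpleGraph (Fin n) := SimpleGraph.comap (⇑e.symm) H
  haveI instG : DecidableRel G.Adj := Classical.decRel _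
  have hdegH : ∀ a, H.degree a = k := by
    rintro (x | y)
    · exact degree_bigGraph_inl hk hp hq (fun h => (hodd h).1) x
    · exact degree_bigGraph_inr hk hp hq (fun h => (hodd h).2) y
  have hreg : ∀ i, G.degree i = k := by
    intro i
    rw [← hdegH (e.symm i), SimpleGraph.degree, SimpleGraph.degree]
    apply Finset.card_bij (fun a _ => e.symm a)
    · intro a ha
      rw [mem_neighborFinset] at ha ⊢
      exact ha
    · intro a _ b _ h
      exact e.symm.injective h
    · intro b hb
      refine ⟨e b, ?_, by simp⟩
      rw [mem_neighborFinset] at hb ⊢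
      show H.Adj (e.symm i) (e.symm (e b))
      rwa [Equiv.symm_apply_apply]
  have hdegseq : degSeq G = Multiset.replicate n k := by
    rw [degSeq]
    apply Multiset.eq_replicate.mpr
    constructor
    · rw [Multiset.card_map]
      have h2 : (Finset.univ : Finset (Fin n)).val.card = Fintype.card (Fin n) := rfl
      rw [h2, Fintype.card_fin]
    · intro b hb
      obtain ⟨v, _, rfl⟩ := Multiset.mem_map.mp hb
      exact hreg v
  have hconn : G.Connected := by
    have hHc := bigGraph_connected (p := p) (q := q) (k := k) hk hp hq
    have hmap : ∀ a b, H.Adj a b → G.Adj (e a) (e b) := by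
      intro a b hab
      show H.Adj (e.symm (e a)) (e.symm (e b))
      rwa [Equiv.symm_apply_apply, Equiv.symm_apply_apply]
    exact hHc.map ⟨fun a => e a, fun {a b} h => hmap a b h⟩ e.surjective
  have hE2 : 2 * G.edgeFinset.card = n * k := by
    rw [← SimpleGraph.sum_degrees_eq_twice_card_edges]
    rw [Finset.sum_congr rfl (fun v _ => hreg v), Finset.sum_const, Finset.card_univ,
      Fintype.card_fin, smul_eq_mul]
  have hEr : (G.edgeFinset.card : ℝ) = n * k / 2 := by
    have h3 := congrArg (fun t : ℕ => (t : ℝ)) hE2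
    push_cast at h3
    linarith
  set f : Fin n → ℝ := fun i => testF p q (e.symm i) with hf
  have hcardp : (Finset.univ : Finset (ZMod p)).card = p := by
    rw [Finset.card_univ, ZMod.card]
  have hcardq : (Finset.univ : Finset (ZMod q)).card = q := by
    rw [Finset.card_univ, ZMod.card]
  have hpqR : ((p:ℝ) + q) = (n:ℝ) := by
    rw [← hpq]; push_cast; ring
  have hsumf : ∑ i, f i = 0 := by
    rw [hf]
    rw [Equiv.sum_comp e.symm (testF p q)]
    rw [Fintype.sum_sum_type]
    simp only [testF, Sum.elim_inl, Sum.elim_inr, Finset.sum_const, hcardp, hcardq, nsmul_eq_mul]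
    ring
  have hsumsq : ∑ i, f i ^ 2 = (p : ℝ) * q * n := by
    rw [hf]
    rw [Equiv.sum_comp e.symm (fun a => testF p q a ^ 2)]
    rw [Fintype.sum_sum_type]
    simp only [testF, Sum.elim_inl, Sum.elim_inr, Finset.sum_const, hcardp, hcardq, nsmul_eq_mul]
    rw [← hpqR]
    ring
  have hfne : f ≠ 0 := by
    intro h0
    have h1 : f (e (Sum.inl 0)) = (q:ℝ) := by
      rw [hf]
      simp only [Equiv.symm_apply_apply, testF, Sum.elim_inl]
    rw [h0] at h1
    have h2 : (q:ℝ) = 0 := h1.symm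
    have h3 : q = 0 := by exact_mod_cast h2
    omega
  have h01p : (0 : ZMod p) ≠ 1 := zero_ne_one_zmod (by omega)
  have h01q : (0 : ZMod q) ≠ 1 := zero_ne_one_zmod (by omega)
  have hQF : f ⬝ᵥ (G.lapMatrix ℝ *ᵥ f) = 2 * (n:ℝ)^2 := by
    have h1 : f ⬝ᵥ (G.lapMatrix ℝ *ᵥ f) =
        (∑ i, ∑ j, if G.Adj i j then (f i - f j)^2 else 0) / 2 := by
      rw [← Matrix.toLinearMap₂'_apply', lapMatrix_toLinearMap₂']
    have h2 : (∑ i, ∑ j, (if G.Adj i j then (f i - f j)^2 else 0))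
        = ∑ a, ∑ b, (if H.Adj a b then (testF p q a - testF p q b)^2 else 0) := by
      rw [← Equiv.sum_comp e (fun i => ∑ j, if G.Adj i j then (f i - f j)^2 else 0)]
      refine Finset.sum_congr rfl fun a _ => ?_
      rw [← Equiv.sum_comp e (fun j => if G.Adj (e a) j then (f (e a) - f j)^2 else 0)]
      refine Finset.sum_congr rfl fun b _ => ?_
      have hadj : G.Adj (e a) (e b) ↔ H.Adj a b := by
        show H.Adj (e.symm (e a)) (e.symm (e b)) ↔ _
        rw [Equiv.symm_apply_apply, Equiv.symm_apply_apply]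
      have hfa : f (e a) = testF p q a := by rw [hf]; simp only [Equiv.symm_apply_apply]
      have hfb : f (e b) = testF p q b := by rw [hf]; simp only [Equiv.symm_apply_apply]
      rw [hfa, hfb]
      exact if_congr hadj rfl rfl
    rw [h1, h2, QF_big (k := k) h01p h01q, hpqR]
    ring
  refine ⟨G, instG, hdegseq, hconn, ?_⟩
  have hlam := lambda1_le G hconn hreg (by omega) f hsumf hfne
  rw [hQF, hsumsq] at hlam
  refine le_trans hlam ?_
  rw [hEr]
  have hkR : (2:ℝ) ≤ (k:ℝ) := by exact_mod_cast hk
  have hnR : (2*(k:ℝ) + 2) ≤ (n:ℝ) := by exact_mod_cast hn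
  have hpR : ((k:ℝ)+1) ≤ (p:ℝ) := by exact_mod_cast hp
  have hqR : ((k:ℝ)+1) ≤ (q:ℝ) := by exact_mod_cast hq
  have hineqR : (n:ℝ) * ((n:ℝ) - 2) ≤ 4 * ((p:ℝ) * q) := by
    have h4 : ((n * (n-2) : ℕ) : ℝ) ≤ ((4 * (p * q) : ℕ) : ℝ) := by exact_mod_cast hineq
    push_cast [Nat.cast_sub (by omega : 2 ≤ n)] at h4
    exact h4
  have hk0 : (0:ℝ) < (k:ℝ) := by linarith
  have hp0 : (0:ℝ) < (p:ℝ) := by linarith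
  have hq0 : (0:ℝ) < (q:ℝ) := by linarith
  have hn0 : (0:ℝ) < (n:ℝ) := by linarith
  have hd1 : (0:ℝ) < (k:ℝ) * ((p:ℝ) * q * n) :=
    mul_pos hk0 (mul_pos (mul_pos hp0 hq0) hn0)
  have hd2 : (0:ℝ) < (n:ℝ) * k / 2 - k := by nlinarith
  rw [div_le_div_iff₀ hd1 hd2]
  nlinarith [mul_le_mul_of_nonneg_left hineqR (by nlinarith : (0:ℝ) ≤ (k:ℝ) * n)]
end

section
/- In the lay-on process applied to a nonnegative integer sequence s, the total number z of new elements equal to 1 that are added has the same parity as the sum of the elements of s: if the sum of elements of s is even (resp. odd), then z is even (resp. odd). -/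
open SimpleGraph Finset

/-- One step of the lay-on process: sort the sequence in decreasing order; if the largest
element is `d` and there are `p` positive elements, add `a = d + 1 - p` new elements equal to
`1` (i.e. `a = 0` if `d ≤ p - 1`); then delete `d` and subtract `1` from the `d` next largest
elements. Returns the number of added ones together with the resulting sequence. -/
def layOnStep (l : List ℕ) : ℕ × List ℕ :=
  match l.insertionSort (· ≥ ·) with
  | [] => (0, [])
  | d :: t =>
    let p := (d :: t).countP (fun x => 0 < x)
    let a := d + 1 - p
    let t' := (t ++ List.replicate a 1).insertionSort (· ≥ ·)
    (a, (t'.take d).map (· - 1) ++ t'.drop d)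

/-- Fueled recursion computing the total number of ones added during the lay-on process. -/
def layOnZAux : ℕ → List ℕ → ℕ
  | 0, _ => 0
  | fuel + 1, l =>
    if l.all (· == 0) then 0
    else (layOnStep l).1 + layOnZAux fuel (layOnStep l).2

/-- The total number `z` of new elements equal to `1` added by the lay-on process applied to
`l`. (The sum of the sequence strictly decreases at each step, so fuel `l.sum + 1` suffices.) -/
def layOnZ (l : List ℕ) : ℕ := layOnZAux (l.sum + 1) l

lemma sorted_take_pos : ∀ (l : List ℕ), l.Pairwise (· ≥ ·) →
    ∀ d, d ≤ l.countP (fun x => 0 < x) → ∀ x ∈ l.take d, 0 < x := by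
  intro l
  induction l with
  | nil => intro _ d _ x hx; simp at hx
  | cons a t ih =>
    intro hs d hd x hx
    cases d with
    | zero => simp at hx
    | succ d =>
      have ha : 0 < a := by
        by_contra h
        push_neg at h
        interval_cases a
        have : t.countP (fun x => 0 < x) = 0 := by
          rw [List.countP_eq_zero]
          intro x hx
          have := (List.pairwise_cons.mp hs).1 x hx
          simp; omega
        simp [List.countP_cons, this] at hd
      rw [List.countP_cons] at hd
      simp [ha] at hd
      simp [List.take_succ_cons] at hx
      rcases hx with h | h
      · omega
      · exact ih (List.pairwise_cons.mp hs).2 d (by omega) x h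

lemma map_sub_one_sum : ∀ (L : List ℕ), (∀ x ∈ L, 0 < x) →
    (L.map (· - 1)).sum + L.length = L.sum := by
  intro L
  induction L with
  | nil => simp
  | cons a t ih =>
    intro h
    have ha := h a (by simp)
    have := ih (fun x hx => h x (by simp [hx]))
    simp [List.sum_cons]
    omega

lemma layOnStep_spec (l : List ℕ) (h : ¬ l.all (· == 0)) :
    ∃ d, 0 < d ∧ (layOnStep l).1 ≤ d ∧
      (layOnStep l).2.sum + 2 * d = l.sum + (layOnStep l).1 := by
  obtain ⟨y, hy, hy0⟩ : ∃ y ∈ l, y ≠ 0 := by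
    simpa using h
  have hperm : (l.insertionSort (· ≥ ·)).Perm l := l.perm_insertionSort _
  have hsorted : (l.insertionSort (· ≥ ·)).Pairwise (· ≥ ·) :=
    l.pairwise_insertionSort _
  rcases hm : l.insertionSort (· ≥ ·) with _ | ⟨d, t⟩
  · exfalso
    have : l = [] := by
      have := hperm
      rw [hm] at this
      exact this.symm.eq_nil  -- maybe wrong name
    simp [this] at hy
  · rw [hm] at hperm hsorted
    have hyl : y ∈ d :: t := hperm.mem_iff.mpr hy
    have hd : 0 < d := by
      rcases List.mem_cons.mp hyl with rfl | hmem
      · omega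
      · have := (List.pairwise_cons.mp hsorted).1 y hmem
        omega
  -- names
    set p := (d :: t).countP (fun x => 0 < x) with hp
    set a := d + 1 - p with hap
    set t' := (t ++ List.replicate a 1).insertionSort (· ≥ ·) with ht'
    have hstep : layOnStep l = (a, (t'.take d).map (· - 1) ++ t'.drop d) := by
      rw [layOnStep, hm]
    have hp1 : p = t.countP (fun x => 0 < x) + 1 := by
      rw [hp, List.countP_cons]
      simp [hd]
    have hperm' : t'.Perm (t ++ List.replicate a 1) := List.perm_insertionSort _ _
    have hsort' : t'.Pairwise (· ≥ ·) := List.pairwise_insertionSort _ _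
    have hcount : d ≤ t'.countP (fun x => 0 < x) := by
      rw [hperm'.countP_eq]
      rw [List.countP_append]
      have : (List.replicate a 1).countP (fun x => 0 < x) = a := by
        simp [List.countP_eq_length_filter, List.filter_replicate]
      omega
    have hlen : d ≤ t'.length := le_trans hcount List.countP_le_length
    have hpos : ∀ x ∈ t'.take d, 0 < x := sorted_take_pos t' hsort' d hcount
    have htake : (t'.take d).length = d := by
      simp [hlen]
    have hsum1 : ((t'.take d).map (· - 1)).sum + d = (t'.take d).sum := by
      have := map_sub_one_sum (t'.take d) hpos
      omega
    have hsum2 : (t'.take d).sum + (t'.drop d).sum = t'.sum := by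
      rw [← List.sum_append, List.take_append_drop]
    have hsumt' : t'.sum = t.sum + a := by
      rw [hperm'.sum_eq, List.sum_append]
      simp [List.sum_replicate, smul_eq_mul]
    have hsuml : l.sum = d + t.sum := by
      rw [← hperm.sum_eq, List.sum_cons]
    refine ⟨d, hd, ?_, ?_⟩
    · rw [hstep]; simp; omega
    · rw [hstep]
      simp only [List.sum_append]
      omega

lemma all_zero_sum {l : List ℕ} (h : l.all (· == 0)) : l.sum = 0 := by
  rw [List.all_eq_true] at h
  induction l with
  | nil => simp
  | cons a t ih =>
    have := h a (by simp)
    simp at this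
    simp [this, ih (fun x hx => h x (by simp [hx]))]

lemma layOnZAux_parity : ∀ fuel l, l.sum < fuel →
    (Even l.sum ↔ Even (layOnZAux fuel l)) := by
  intro fuel
  induction fuel with
  | zero => intro l h; omega
  | succ n ih =>
    intro l h
    by_cases hz : l.all (· == 0)
    · rw [layOnZAux, if_pos hz, all_zero_sum hz]
    · rw [layOnZAux, if_neg hz]
      obtain ⟨d, hd, ha, heq⟩ := layOnStep_spec l hz
      have hlt : (layOnStep l).2.sum < l.sum := by omega
      have := ih (layOnStep l).2 (by omega)
      rw [Nat.even_iff, Nat.even_iff] at this ⊢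
      omega

/-- The number of ones added in the lay-on process has the same parity as the sum of the
elements of the starting sequence. -/
theorem layOn_parity (l : List ℕ) : (Even l.sum ↔ Even (layOnZ l)) :=
  layOnZAux_parity _ l (by omega)
end

section
/- Every sequence s = (d_1,...,d_n) of integers with d_1 ≥ d_2 ≥ ... ≥ d_n ≥ 2 has a connected extension: there exists a nonnegative integer z such that the sequence obtained by appending z elements equal to 1 to s is the degree sequence of a connected simple graph. -/
open SimpleGraph Finset

/-! ### Auxiliary construction : a caterpillar graph -/

/-- The degree of vertex `i` inside the path `0 - 1 - ⋯ - (n-1)`. -/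
def pathDeg (n : ℕ) (i : Fin n) : ℕ :=
  (if (i : ℕ) + 1 < n then 1 else 0) + (if 0 < (i : ℕ) then 1 else 0)

lemma pathDeg_le_two (n : ℕ) (i : Fin n) : pathDeg n i ≤ 2 := by
  unfold pathDeg; split_ifs <;> omega

/-- Number of pendant leaves to attach at spine vertex `i`. -/
def leafCt (n : ℕ) (d : Fin n → ℕ) (i : Fin n) : ℕ := d i - pathDeg n i

/-- Vertex type of the caterpillar: spine vertices plus leaves. -/
abbrev Vt (n : ℕ) (d : Fin n → ℕ) : Type := Fin n ⊕ (Σ i : Fin n, Fin (leafCt n d i))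

/-- Adjacency of the caterpillar. -/
def adjF (n : ℕ) (d : Fin n → ℕ) : Vt n d → Vt n d → Prop
  | Sum.inl i, Sum.inl j => (i : ℕ) + 1 = (j : ℕ) ∨ (j : ℕ) + 1 = (i : ℕ)
  | Sum.inl i, Sum.inr x => x.1 = i
  | Sum.inr x, Sum.inl i => x.1 = i
  | Sum.inr _, Sum.inr _ => False

instance adjF_dec (n : ℕ) (d : Fin n → ℕ) : DecidableRel (adjF n d) := fun u v =>
  match u, v with
  | Sum.inl _, Sum.inl _ => inferInstanceAs (Decidable (_ ∨ _))
  | Sum.inl _, Sum.inr _ => inferInstanceAs (Decidable (_ = _))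
  | Sum.inr _, Sum.inl _ => inferInstanceAs (Decidable (_ = _))
  | Sum.inr _, Sum.inr _ => inferInstanceAs (Decidable False)

/-- The caterpillar graph. -/
def spider (n : ℕ) (d : Fin n → ℕ) : SimpleGraph (Vt n d) where
  Adj := adjF n d
  symm := ⟨by
    rintro (i | x) (j | y) h <;> simp only [adjF] at h ⊢ <;> tauto⟩
  loopless := ⟨by
    rintro (i | x) h <;> simp only [adjF] at h
    omega⟩

instance spider_dec (n : ℕ) (d : Fin n → ℕ) : DecidableRel (spider n d).Adj :=
  adjF_dec n d

lemma count_fin (n k : ℕ) :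
    (∑ j : Fin n, if (j : ℕ) = k then 1 else 0) = if k < n then 1 else 0 := by
  split_ifs with h
  · have h1 : ∀ j : Fin n, ((if (j : ℕ) = k then 1 else 0) : ℕ)
        = if j = (⟨k, h⟩ : Fin n) then 1 else 0 := by
      intro j; simp [Fin.ext_iff]
    rw [Finset.sum_congr rfl fun j _ => h1 j]
    simp
  · apply Finset.sum_eq_zero
    intro j _
    rw [if_neg]
    exact fun hjk => h (hjk ▸ j.isLt)

lemma spider_degree_inl (n : ℕ) (d : Fin n → ℕ) (h2 : ∀ i, 2 ≤ d i) (i : Fin n) :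
    (spider n d).degree (Sum.inl i) = d i := by
  rw [← card_neighborFinset_eq_degree, neighborFinset_eq_filter, Finset.card_filter]
  rw [Fintype.sum_sum_type]
  have hA : (∑ j : Fin n, if (spider n d).Adj (Sum.inl i) (Sum.inl j) then 1 else 0)
      = pathDeg n i := by
    have h1 : ∀ j : Fin n, ((if (spider n d).Adj (Sum.inl i) (Sum.inl j) then 1 else 0) : ℕ)
        = (if ((j : ℕ)) = (i : ℕ) + 1 then 1 else 0)
          + (if ((j : ℕ)) = (i : ℕ) - 1 ∧ 0 < (i : ℕ) then 1 else 0) := by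
      intro j
      show ((if adjF n d (Sum.inl i) (Sum.inl j) then 1 else 0) : ℕ) = _
      by_cases ha : adjF n d (Sum.inl i) (Sum.inl j)
      · rw [if_pos ha]; simp only [adjF] at ha; split_ifs <;> omega
      · rw [if_neg ha]; simp only [adjF] at ha; split_ifs <;> omega
    rw [Finset.sum_congr rfl fun j _ => h1 j, Finset.sum_add_distrib, count_fin]
    unfold pathDeg
    by_cases hi : 0 < (i : ℕ)
    · have : (∑ j : Fin n, if ((j : ℕ)) = (i : ℕ) - 1 ∧ 0 < (i : ℕ) then 1 else 0)
          = ∑ j : Fin n, if ((j : ℕ)) = (i : ℕ) - 1 then 1 else 0 := by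
        apply Finset.sum_congr rfl; intro j _; simp [hi]
      rw [this, count_fin, if_pos (by omega : (i : ℕ) - 1 < n), if_pos hi]
    · have : (∑ j : Fin n, if ((j : ℕ)) = (i : ℕ) - 1 ∧ 0 < (i : ℕ) then 1 else 0) = 0 := by
        apply Finset.sum_eq_zero; intro j _; simp [hi]
      rw [this, if_neg hi]
  have hB : (∑ x : (Σ j : Fin n, Fin (leafCt n d j)),
      if (spider n d).Adj (Sum.inl i) (Sum.inr x) then 1 else 0) = leafCt n d i := by
    have h1 : ∀ x : (Σ j : Fin n, Fin (leafCt n d j)),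
        ((if (spider n d).Adj (Sum.inl i) (Sum.inr x) then 1 else 0) : ℕ)
        = if x.1 = i then 1 else 0 := fun x => rfl
    rw [Finset.sum_congr rfl fun x _ => h1 x, ← Finset.univ_sigma_univ, Finset.sum_sigma]
    simp [apply_ite Finset.card, Finset.sum_ite_eq']
  rw [hA, hB]
  have := pathDeg_le_two n i
  have := h2 i
  unfold leafCt
  omega

lemma spider_degree_inr (n : ℕ) (d : Fin n → ℕ) (x : Σ i : Fin n, Fin (leafCt n d i)) :
    (spider n d).degree (Sum.inr x) = 1 := by
  rw [← card_neighborFinset_eq_degree, neighborFinset_eq_filter, Finset.card_filter]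
  rw [Fintype.sum_sum_type]
  have hA : (∑ j : Fin n, if (spider n d).Adj (Sum.inr x) (Sum.inl j) then 1 else 0) = 1 := by
    have h1 : ∀ j : Fin n, ((if (spider n d).Adj (Sum.inr x) (Sum.inl j) then 1 else 0) : ℕ)
        = if j = x.1 then 1 else 0 := by
      intro j
      show ((if adjF n d (Sum.inr x) (Sum.inl j) then 1 else 0) : ℕ) = _
      by_cases h : x.1 = j
      · rw [if_pos (show adjF n d (Sum.inr x) (Sum.inl j) from h), if_pos h.symm]
      · rw [if_neg (show ¬adjF n d (Sum.inr x) (Sum.inl j) from h), if_neg (Ne.symm h)]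
    rw [Finset.sum_congr rfl fun j _ => h1 j]
    simp
  have hB : (∑ y : (Σ j : Fin n, Fin (leafCt n d j)),
      if (spider n d).Adj (Sum.inr x) (Sum.inr y) then 1 else 0) = 0 := by
    apply Finset.sum_eq_zero; intro y _
    rw [if_neg]
    exact fun h => h
  rw [hA, hB]

lemma spider_connected (n : ℕ) (d : Fin n → ℕ) (hn : 0 < n) : (spider n d).Connected := by
  rw [connected_iff_exists_forall_reachable]
  refine ⟨Sum.inl ⟨0, hn⟩, ?_⟩
  have key : ∀ m (hm : m < n),
      (spider n d).Reachable (Sum.inl ⟨0, hn⟩) (Sum.inl (⟨m, hm⟩ : Fin n)) := by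
    intro m
    induction m with
    | zero => intro hm; exact Reachable.refl _
    | succ k ih =>
      intro hm
      have hk : k < n := Nat.lt_of_succ_lt hm
      refine (ih hk).trans (Adj.reachable ?_)
      show adjF n d (Sum.inl ⟨k, hk⟩) (Sum.inl ⟨k + 1, hm⟩)
      exact Or.inl rfl
  rintro (j | x)
  · exact key j.1 j.2
  · refine (key x.1.1 x.1.2).trans (Adj.reachable ?_)
    show adjF n d (Sum.inl x.1) (Sum.inr x)
    rfl

/-- Every sequence of integers all at least `2` has a connected extension: appending a suitable
number `z` of elements equal to `1` yields the degree sequence of a connected simple graph. -/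
theorem connected_extension (n : ℕ) (d : Fin n → ℕ) (h2 : ∀ i, 2 ≤ d i) :
    ∃ (z : ℕ) (G : SimpleGraph (Fin (n + z))) (_ : DecidableRel G.Adj),
      G.Connected ∧ degSeq G = Finset.univ.val.map d + Multiset.replicate z 1 := by
  rcases Nat.eq_zero_or_pos n with hn | hn
  · subst hn
    refine ⟨2, ⊤, inferInstance, connected_top, ?_⟩
    have : (Finset.univ.val.map d : Multiset ℕ) = 0 := by simp
    rw [this, zero_add]
    decide
  · set z : ℕ := Fintype.card (Σ i : Fin n, Fin (leafCt n d i)) with hz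
    have hcard : Fintype.card (Vt n d) = n + z := by
      show Fintype.card (Fin n ⊕ (Σ i : Fin n, Fin (leafCt n d i))) = n + z
      simp [hz]
    let e : Vt n d ≃ Fin (n + z) := Fintype.equivFinOfCardEq hcard
    refine ⟨z, (spider n d).comap e.symm, fun a b => spider_dec n d _ _, ?_, ?_⟩
    · have iso : spider n d ≃g (spider n d).comap ⇑e.symm :=
        ⟨e, by intro a b; show (spider n d).Adj (e.symm (e a)) (e.symm (e b)) ↔ _; simp⟩
      exact iso.connected_iff.mp (spider_connected n d hn)
    · have hdeg : ∀ w : Fin (n + z),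
          ((spider n d).comap ⇑e.symm).degree w = (spider n d).degree (e.symm w) := by
        intro w
        rw [← card_neighborFinset_eq_degree, neighborFinset_eq_filter, Finset.card_filter,
          ← card_neighborFinset_eq_degree, neighborFinset_eq_filter, Finset.card_filter]
        rw [← Equiv.sum_comp e.symm (fun v => if (spider n d).Adj (e.symm w) v then 1 else 0)]
        rfl
      show (Finset.univ.val.map fun w => ((spider n d).comap ⇑e.symm).degree w) = _
      rw [Multiset.map_congr rfl fun w _ => hdeg w]
      have hmap : (Finset.univ.val.map fun w : Fin (n + z) => (spider n d).degree (e.symm w))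
          = (Finset.univ.val : Multiset (Vt n d)).map (fun v => (spider n d).degree v) := by
        have h1 : (Finset.univ.val : Multiset (Fin (n + z))).map ⇑e.symm
            = (Finset.univ.val : Multiset (Vt n d)) := by
          have := Finset.map_univ_equiv e.symm
          calc (Finset.univ.val : Multiset (Fin (n + z))).map ⇑e.symm
              = (Finset.univ.map e.symm.toEmbedding).val := by rw [Finset.map_val]; rfl
            _ = (Finset.univ.val : Multiset (Vt n d)) := by rw [this]
        rw [← h1, Multiset.map_map]
        rfl
      rw [hmap]
      have huniv : (Finset.univ.val : Multiset (Vt n d))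
          = (Finset.univ.val : Multiset (Fin n)).map Sum.inl
            + (Finset.univ.val : Multiset (Σ i : Fin n, Fin (leafCt n d i))).map Sum.inr := by
        show (Finset.univ.val : Multiset (Fin n ⊕ (Σ i : Fin n, Fin (leafCt n d i)))) = _
        rw [← Finset.univ_disjSum_univ, Finset.val_disjSum]
        rfl
      rw [huniv, Multiset.map_add, Multiset.map_map, Multiset.map_map]
      congr 1
      · exact Multiset.map_congr rfl fun i _ => spider_degree_inl n d h2 i
      · have hone : Multiset.map ((fun v => (spider n d).degree v) ∘ Sum.inr)
            (Finset.univ.val : Multiset (Σ i : Fin n, Fin (leafCt n d i)))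
            = Multiset.map (fun _ => 1) Finset.univ.val :=
          Multiset.map_congr rfl fun x _ => spider_degree_inr n d x
        rw [hone, Multiset.map_const']
        rfl
end
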